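/- arXiv:1505.07321 — 2 statements merged into one kernel-verified Lean document; each statement's English description precedes it below -/
import Mathlib

section
/- Let a_0, a_1 : ℕ → ℝ and ε_0, ε_1 : ℕ → ℝ be sequences satisfying, for all n ≥ 1 and i ∈ {0,1}, the recurrence a_i(n) = E[a_0(I_n^i)] + E[a_1(n − I_n^i)] + ε_i(n), where I_n^i is a binomial B(n, p_{i0}) random variable. If ε_i(n) = O(n^α) as n → ∞ for some fixed α ∈ ℝ and both i ∈ {0,1}, then as n → ∞: a_i(n) = O(n) if α < 1; a_i(n) = O(n^α) if α > 1; and a_i(n) = O(n log n) if α = 1. -/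
open Filter Asymptotics Real Finset

/-- Expectation of `a` under the binomial distribution `B(n, p)`:
`E[a(I_n)] = Σ_{k=0}^n C(n,k) p^k (1-p)^{n-k} a(k)`. -/
noncomputable def binomExp (p : ℝ) (n : ℕ) (a : ℕ → ℝ) : ℝ :=
  ∑ k ∈ Finset.range (n + 1), (n.choose k : ℝ) * p ^ k * (1 - p) ^ (n - k) * a k

noncomputable def W (p : ℝ) (n k : ℕ) : ℝ := (n.choose k : ℝ) * p ^ k * (1 - p) ^ (n - k)

lemma binomExp_eq_sum (p : ℝ) (n : ℕ) (a : ℕ → ℝ) :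
    binomExp p n a = ∑ k ∈ range (n+1), W p n k * a k := rfl

lemma W_nonneg {p : ℝ} (hp : 0 ≤ p) (hp1 : p ≤ 1) (n k : ℕ) : 0 ≤ W p n k := by
  have h1 : (0:ℝ) ≤ 1 - p := by linarith
  unfold W; positivity

set_option maxHeartbeats 1600000
set_option linter.unusedSectionVars false
set_option linter.unusedVariables false


variable (p : ℝ) (n : ℕ)

lemma choose_mul_cast (m k : ℕ) :
    ((m+1).choose (k+1) : ℝ) * (k+1) = ((m:ℝ)+1) * (m.choose k) := by
  have h := Nat.add_one_mul_choose_eq m k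
  exact_mod_cast congrArg (fun x : ℕ => (x : ℝ)) (by simpa [Nat.succ_eq_add_one, mul_comm] using h.symm)

lemma weight_sum : ∑ k ∈ range (n+1), W p n k = 1 := by
  have h := add_pow p (1-p) n
  simp only [add_sub_cancel, one_pow] at h
  calc ∑ k ∈ range (n+1), W p n k
      = ∑ k ∈ range (n+1), p ^ k * (1-p) ^ (n-k) * (n.choose k : ℝ) :=
        Finset.sum_congr rfl (fun k _ => by unfold W; ring)
    _ = 1 := h.symm

lemma binomExp_const (c : ℝ) : binomExp p n (fun _ => c) = c := by
  rw [binomExp_eq_sum, ← Finset.sum_mul, weight_sum, one_mul]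

lemma binomExp_reduce (g : ℕ → ℝ) (m : ℕ) :
    binomExp p (m+1) (fun k => (k:ℝ) * g k) = ((m:ℝ)+1) * p * binomExp p m (fun k => g (k+1)) := by
  unfold binomExp
  rw [Finset.sum_range_succ']
  simp only [Nat.cast_zero, zero_mul, mul_zero, add_zero, Nat.cast_add, Nat.cast_one]
  rw [Finset.mul_sum]
  refine Finset.sum_congr rfl (fun k hk => ?_)
  have h2 : (m+1-(k+1)) = m - k := by omega
  rw [h2]
  calc ((m+1).choose (k+1) : ℝ) * p ^ (k+1) * (1-p) ^ (m-k) * (((k:ℝ)+1) * g (k+1))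
      = (((m+1).choose (k+1) : ℝ) * ((k:ℝ)+1)) * p ^ (k+1) * (1-p) ^ (m-k) * g (k+1) := by ring
    _ = _ := by rw [choose_mul_cast]; ring

lemma binomExp_add (f g : ℕ → ℝ) : binomExp p n (fun k => f k + g k) = binomExp p n f + binomExp p n g := by
  unfold binomExp; rw [← Finset.sum_add_distrib]; exact Finset.sum_congr rfl fun k _ => by ring

lemma binomExp_smul (c : ℝ) (f : ℕ → ℝ) : binomExp p n (fun k => c * f k) = c * binomExp p n f := by
  unfold binomExp; rw [Finset.mul_sum]; exact Finset.sum_congr rfl fun k _ => by ring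

lemma binomExp_congr (f g : ℕ → ℝ) (h : ∀ k, f k = g k) : binomExp p n f = binomExp p n g := by
  rw [funext h]

lemma binomExp_id : binomExp p n (fun k => (k:ℝ)) = n * p := by
  rcases Nat.eq_zero_or_pos n with h | h
  · subst h; unfold binomExp; simp
  obtain ⟨m, rfl⟩ := Nat.exists_eq_succ_of_ne_zero h.ne'
  rw [Nat.succ_eq_add_one,
    binomExp_congr p (m+1) _ (fun k => (k:ℝ) * 1) (fun k => (mul_one (k:ℝ)).symm),
    binomExp_reduce, binomExp_const]
  push_cast; ring

lemma binomExp_sq_fac : binomExp p n (fun k => (k:ℝ) * ((k:ℝ)-1)) = n * (n-1) * p^2 := by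
  rcases Nat.eq_zero_or_pos n with h | h
  · subst h; unfold binomExp; simp
  obtain ⟨m, rfl⟩ := Nat.exists_eq_succ_of_ne_zero h.ne'
  rw [Nat.succ_eq_add_one, binomExp_reduce,
    binomExp_congr p m _ (fun k => (k:ℝ)) (fun k => by push_cast; ring), binomExp_id]
  push_cast; ring

lemma binomExp_var : binomExp p n (fun k => ((k:ℝ) - n*p)^2) = n * p * (1-p) := by
  rw [binomExp_congr p n _
      (fun k => (k:ℝ) * ((k:ℝ)-1) + ((1 - 2*(n*p)) * (k:ℝ) + (n*p)^2 * 1)) (fun k => by ring),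
    binomExp_add, binomExp_add, binomExp_smul, binomExp_smul, binomExp_sq_fac, binomExp_id,
    binomExp_const]
  ring

lemma binomExp_reflect (a : ℕ → ℝ) :
    binomExp p n (fun k => a (n - k)) = binomExp (1-p) n a := by
  rw [binomExp_eq_sum, binomExp_eq_sum,
    ← Finset.sum_range_reflect (fun k => W p n k * a (n - k)) (n+1)]
  refine Finset.sum_congr rfl (fun j hj => ?_)
  rw [Finset.mem_range] at hj
  have hj' : j ≤ n := by omega
  have h1 : n + 1 - 1 - j = n - j := by omega
  have h2 : n - (n - j) = j := by omega
  rw [h1, h2]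
  unfold W
  rw [Nat.choose_symm hj', h2, show (1 - (1 - p)) = p from by ring]
  ring


section tail
variable {r : ℝ} (hr : 0 < r) (hr1 : r < 1) (n : ℕ)
include hr hr1

lemma tail_bound {t : ℝ} (ht : 0 < t) :
    ∑ k ∈ (range (n+1)).filter (fun k : ℕ => ¬ (|(k:ℝ) - n*r| ≤ t)), W r n k
      ≤ n * r * (1-r) / t^2 := by
  have hW : ∀ k, 0 ≤ W r n k := W_nonneg hr.le hr1.le n
  have h1 : ∀ k ∈ (range (n+1)).filter (fun k : ℕ => ¬ (|(k:ℝ) - n*r| ≤ t)),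
      W r n k ≤ W r n k * (((k:ℝ) - n*r)^2 / t^2) := by
    intro k hk
    rw [Finset.mem_filter] at hk
    have h2 : t ≤ |(k:ℝ) - n*r| := le_of_not_ge hk.2
    have h3 : t^2 ≤ ((k:ℝ) - n*r)^2 := by
      calc t^2 ≤ |(k:ℝ) - n*r|^2 := by nlinarith [abs_nonneg ((k:ℝ) - n*r)]
        _ = _ := sq_abs _
    have : (1:ℝ) ≤ ((k:ℝ) - n*r)^2 / t^2 := (one_le_div (by positivity)).2 h3
    exact le_mul_of_one_le_right (hW k) this
  calc ∑ k ∈ (range (n+1)).filter (fun k : ℕ => ¬ (|(k:ℝ) - n*r| ≤ t)), W r n k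
      ≤ ∑ k ∈ (range (n+1)).filter (fun k : ℕ => ¬ (|(k:ℝ) - n*r| ≤ t)),
          W r n k * (((k:ℝ) - n*r)^2 / t^2) := Finset.sum_le_sum h1
    _ ≤ ∑ k ∈ range (n+1), W r n k * (((k:ℝ) - n*r)^2 / t^2) := by
        refine Finset.sum_le_sum_of_subset_of_nonneg (Finset.filter_subset _ _) ?_
        intro k _ _; exact mul_nonneg (hW k) (by positivity)
    _ = (∑ k ∈ range (n+1), W r n k * ((k:ℝ) - n*r)^2) / t^2 := by
        rw [Finset.sum_div]; exact Finset.sum_congr rfl fun k _ => by ring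
    _ = n * r * (1-r) / t^2 := by rw [← binomExp_eq_sum, binomExp_var]

end tail


noncomputable def cc (r : ℝ) : ℝ := min r (1-r) / 2
noncomputable def TB (r : ℝ) : ℝ := r * (1-r) / (cc r)^2
noncomputable def Fev (r : ℝ) (n : ℕ) : Finset ℕ :=
  (range (n+1)).filter (fun k : ℕ => |(k:ℝ) - n*r| ≤ cc r * n)

set_option linter.unusedSectionVars false
section ev
variable {r : ℝ} (hr : 0 < r) (hr1 : r < 1) (n : ℕ)
include hr hr1

lemma cc_pos : 0 < cc r := by
  unfold cc
  rcases le_total r (1-r) with h|h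
  · rw [min_eq_left h]; linarith
  · rw [min_eq_right h]; linarith

lemma cc_le_r : 2 * cc r ≤ r := by unfold cc; have := min_le_left r (1-r); linarith
lemma cc_le_r' : 2 * cc r ≤ 1 - r := by unfold cc; have := min_le_right r (1-r); linarith
lemma cc_lt_one : cc r < 1 := by have h := cc_le_r' hr hr1; have := hr; linarith [cc_pos hr hr1]
lemma TB_pos : 0 < TB r := by
  have hc := cc_pos hr hr1
  have h2 : 0 < r * (1-r) := by nlinarith
  exact div_pos h2 (pow_pos hc 2)

lemma mem_Fev {k : ℕ} (hk : k ∈ Fev r n) :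
    cc r * n ≤ (k:ℝ) ∧ (k:ℝ) ≤ (1 - cc r) * n ∧ k ≤ n := by
  rw [Fev, Finset.mem_filter, Finset.mem_range] at hk
  obtain ⟨hk1, hk2⟩ := hk
  have h1 := abs_le.1 hk2
  have h2 := cc_le_r hr hr1
  have h3 := cc_le_r' hr hr1
  refine ⟨by nlinarith [h1.1], by nlinarith [h1.2], by omega⟩

lemma sum_notFev_le (hn : 1 ≤ n) :
    ∑ k ∈ (range (n+1)).filter (fun k : ℕ => ¬ (|(k:ℝ) - n*r| ≤ cc r * n)), W r n k
      ≤ TB r / n := by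
  have hc := cc_pos hr hr1
  have hn' : (0:ℝ) < n := by exact_mod_cast hn
  have h := tail_bound hr hr1 n (t := cc r * n) (by positivity)
  calc _ ≤ (n:ℝ) * r * (1-r) / (cc r * n)^2 := h
    _ = TB r / n := by unfold TB; field_simp

lemma sum_Fev_k_le :
    ∑ k ∈ Fev r n, W r n k * k ≤ n * r := by
  have hW := W_nonneg hr.le hr1.le n
  calc ∑ k ∈ Fev r n, W r n k * k ≤ ∑ k ∈ range (n+1), W r n k * k := by
        refine Finset.sum_le_sum_of_subset_of_nonneg (Finset.filter_subset _ _) ?_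
        intro k _ _; exact mul_nonneg (hW k) (by positivity)
    _ = n * r := by rw [← binomExp_eq_sum, binomExp_id]

lemma sum_Fev_k_ge (hn : 1 ≤ n) :
    n * r - TB r ≤ ∑ k ∈ Fev r n, W r n k * k := by
  have hW := W_nonneg hr.le hr1.le n
  have hn' : (0:ℝ) < n := by exact_mod_cast hn
  have hsplit := Finset.sum_filter_add_sum_filter_not (range (n+1))
    (fun k : ℕ => |(k:ℝ) - n*r| ≤ cc r * n) (fun k => W r n k * k)
  have hnotle : ∑ k ∈ (range (n+1)).filter (fun k : ℕ => ¬ (|(k:ℝ) - n*r| ≤ cc r * n)),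
      W r n k * k ≤ TB r := by
    calc ∑ k ∈ (range (n+1)).filter (fun k : ℕ => ¬ (|(k:ℝ) - n*r| ≤ cc r * n)), W r n k * k
        ≤ ∑ k ∈ (range (n+1)).filter (fun k : ℕ => ¬ (|(k:ℝ) - n*r| ≤ cc r * n)), W r n k * n := by
          refine Finset.sum_le_sum (fun k hk => ?_)
          rw [Finset.mem_filter, Finset.mem_range] at hk
          exact mul_le_mul_of_nonneg_left (by exact_mod_cast Nat.lt_succ_iff.1 hk.1) (hW k)
      _ = (∑ k ∈ (range (n+1)).filter (fun k : ℕ => ¬ (|(k:ℝ) - n*r| ≤ cc r * n)), W r n k) * n := by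
          rw [Finset.sum_mul]
      _ ≤ (TB r / n) * n := mul_le_mul_of_nonneg_right (sum_notFev_le hr hr1 n hn) hn'.le
      _ = TB r := by field_simp
  have hid : ∑ k ∈ range (n+1), W r n k * (k:ℝ) = n * r := by rw [← binomExp_eq_sum, binomExp_id]
  rw [hid] at hsplit
  rw [Fev]
  linarith [hsplit, hnotle]

end ev

lemma core_up {r α : ℝ} (hr : 0 < r) (hr1 : r < 1) (hα : 1 < α) :
    ∃ δ > 0, ∀ᶠ n : ℕ in atTop,
      binomExp r n (fun k => (k:ℝ)^α) ≤ (r - δ) * (n:ℝ)^α := by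
  have hc := cc_pos hr hr1
  have hc1 := cc_lt_one hr hr1
  set c := cc r with hcdef
  set θ := (1-c)^(α-1) with hθdef
  have hθ1 : θ < 1 := Real.rpow_lt_one (by linarith) (by linarith) (by linarith)
  have hθ0 : 0 < θ := Real.rpow_pos_of_pos (by linarith) _
  refine ⟨r * (1-θ)/2, by nlinarith, ?_⟩
  set δ := r * (1-θ)/2 with hδdef
  have hδ : 0 < δ := by have : 0 < r*(1-θ) := by nlinarith
                        rw [hδdef]; linarith
  have hev : ∀ᶠ n : ℕ in atTop, TB r / n ≤ δ :=
    (tendsto_const_div_atTop_nhds_zero_nat (TB r)).eventually (eventually_le_nhds hδ)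
  filter_upwards [hev, eventually_ge_atTop 1] with n hTB hn1
  have hn' : (0:ℝ) < n := by exact_mod_cast hn1
  have hW := W_nonneg hr.le hr1.le n
  have hnα : (0:ℝ) ≤ (n:ℝ)^α := Real.rpow_nonneg hn'.le α
  rw [binomExp_eq_sum,
    ← Finset.sum_filter_add_sum_filter_not (range (n+1)) (fun k : ℕ => |(k:ℝ) - n*r| ≤ c * n)]
  have hC0 : (0:ℝ) ≤ ((1-c) * n)^(α-1) := Real.rpow_nonneg (by nlinarith) _
  have hA : ∑ k ∈ Fev r n, W r n k * (k:ℝ)^α ≤ θ * r * (n:ℝ)^α := by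
    have hpt : ∀ k ∈ Fev r n, W r n k * (k:ℝ)^α ≤ ((1-c)*n)^(α-1) * (W r n k * k) := by
      intro k hk
      obtain ⟨hk1, hk2, hk3⟩ := mem_Fev hr hr1 n hk
      have hk0 : (0:ℝ) < k := lt_of_lt_of_le (by positivity) hk1
      have hsplitk := Real.rpow_add hk0 1 (α-1)
      rw [show (1:ℝ) + (α-1) = α from by ring, Real.rpow_one] at hsplitk
      have hle : (k:ℝ)^(α-1) ≤ ((1-c)*n)^(α-1) :=
        Real.rpow_le_rpow hk0.le hk2 (by linarith)
      calc W r n k * (k:ℝ)^α = (W r n k * k) * (k:ℝ)^(α-1) := by rw [hsplitk]; ring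
        _ ≤ (W r n k * k) * ((1-c)*n)^(α-1) := by
            refine mul_le_mul_of_nonneg_left hle (mul_nonneg (hW k) hk0.le)
        _ = ((1-c)*n)^(α-1) * (W r n k * k) := by ring
    calc ∑ k ∈ Fev r n, W r n k * (k:ℝ)^α
        ≤ ∑ k ∈ Fev r n, ((1-c)*n)^(α-1) * (W r n k * k) := Finset.sum_le_sum hpt
      _ = ((1-c)*n)^(α-1) * ∑ k ∈ Fev r n, W r n k * k := by rw [Finset.mul_sum]
      _ ≤ ((1-c)*n)^(α-1) * (n * r) :=
          mul_le_mul_of_nonneg_left (sum_Fev_k_le hr hr1 n) hC0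
      _ = θ * r * (n:ℝ)^α := by
          rw [Real.mul_rpow (by linarith : (0:ℝ) ≤ 1-c) hn'.le]
          have h2 : (n:ℝ)^(α-1) * (n:ℝ) = (n:ℝ)^α := by
            nth_rewrite 2 [← Real.rpow_one (n:ℝ)]
            rw [← Real.rpow_add hn', sub_add_cancel]
          nlinarith [h2]
  have hB : ∑ k ∈ (range (n+1)).filter (fun k : ℕ => ¬ (|(k:ℝ) - n*r| ≤ c * n)),
      W r n k * (k:ℝ)^α ≤ (TB r / n) * (n:ℝ)^α := by
    calc ∑ k ∈ (range (n+1)).filter (fun k : ℕ => ¬ (|(k:ℝ) - n*r| ≤ c * n)), W r n k * (k:ℝ)^α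
        ≤ ∑ k ∈ (range (n+1)).filter (fun k : ℕ => ¬ (|(k:ℝ) - n*r| ≤ c * n)),
            W r n k * (n:ℝ)^α := by
          refine Finset.sum_le_sum (fun k hk => ?_)
          rw [Finset.mem_filter, Finset.mem_range] at hk
          have : (k:ℝ) ≤ n := by exact_mod_cast Nat.lt_succ_iff.1 hk.1
          exact mul_le_mul_of_nonneg_left
            (Real.rpow_le_rpow (Nat.cast_nonneg k) this (by linarith)) (hW k)
      _ = (∑ k ∈ (range (n+1)).filter (fun k : ℕ => ¬ (|(k:ℝ) - n*r| ≤ c * n)), W r n k)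
            * (n:ℝ)^α := by rw [Finset.sum_mul]
      _ ≤ (TB r / n) * (n:ℝ)^α :=
          mul_le_mul_of_nonneg_right (sum_notFev_le hr hr1 n hn1) hnα
  have hFev : (range (n+1)).filter (fun k : ℕ => |(k:ℝ) - n*r| ≤ c * n) = Fev r n := rfl
  rw [hFev]
  have : θ * r * (n:ℝ)^α + (TB r / n) * (n:ℝ)^α ≤ (r - δ) * (n:ℝ)^α := by
    have h3 : θ * r + TB r / n ≤ r - δ := by
      have : θ * r + δ = r - δ := by rw [hδdef]; ring
      linarith
    nlinarith [h3]
  linarith [hA, hB, this]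

lemma core_low {r β : ℝ} (hr : 0 < r) (hr1 : r < 1) (hβ : 0 < β) (hβ1 : β < 1) :
    ∃ δ > 0, ∀ᶠ n : ℕ in atTop,
      (r + δ) * (n:ℝ)^β ≤ binomExp r n (fun k => (k:ℝ)^β) := by
  have hc := cc_pos hr hr1
  have hc1 := cc_lt_one hr hr1
  have hTBpos := TB_pos hr hr1
  set c := cc r with hcdef
  set θ := (1-c)^(β-1) with hθdef
  have hθ1 : 1 < θ := by
    rw [hθdef, Real.one_lt_rpow_iff_of_pos (by linarith)]
    right; constructor <;> linarith
  have hθ0 : 0 < θ := by linarith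
  refine ⟨r * (θ-1)/2, by nlinarith, ?_⟩
  set δ := r * (θ-1)/2 with hδdef
  have hδ : 0 < δ := by have : 0 < r*(θ-1) := by nlinarith
                        rw [hδdef]; linarith
  have hη : 0 < δ / θ := by positivity
  have hev : ∀ᶠ n : ℕ in atTop, TB r / n ≤ δ / θ :=
    (tendsto_const_div_atTop_nhds_zero_nat (TB r)).eventually (eventually_le_nhds hη)
  filter_upwards [hev, eventually_ge_atTop 1] with n hTB hn1
  have hn' : (0:ℝ) < n := by exact_mod_cast hn1
  have hW := W_nonneg hr.le hr1.le n
  have hnβ : (0:ℝ) < (n:ℝ)^β := Real.rpow_pos_of_pos hn' β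
  rw [binomExp_eq_sum,
    ← Finset.sum_filter_add_sum_filter_not (range (n+1)) (fun k : ℕ => |(k:ℝ) - n*r| ≤ c * n)]
  have hC0 : (0:ℝ) ≤ ((1-c) * n)^(β-1) := Real.rpow_nonneg (by nlinarith) _
  have hFev : (range (n+1)).filter (fun k : ℕ => |(k:ℝ) - n*r| ≤ c * n) = Fev r n := rfl
  rw [hFev]
  have hA : ((1-c)*n)^(β-1) * (n * r - TB r) ≤ ∑ k ∈ Fev r n, W r n k * (k:ℝ)^β := by
    have hpt : ∀ k ∈ Fev r n, ((1-c)*n)^(β-1) * (W r n k * k) ≤ W r n k * (k:ℝ)^β := by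
      intro k hk
      obtain ⟨hk1, hk2, hk3⟩ := mem_Fev hr hr1 n hk
      have hk0 : (0:ℝ) < k := lt_of_lt_of_le (by positivity) hk1
      have hsplitk := Real.rpow_add hk0 1 (β-1)
      rw [show (1:ℝ) + (β-1) = β from by ring, Real.rpow_one] at hsplitk
      have hle : ((1-c)*n)^(β-1) ≤ (k:ℝ)^(β-1) :=
        Real.rpow_le_rpow_of_nonpos hk0 hk2 (by linarith)
      calc ((1-c)*n)^(β-1) * (W r n k * k) ≤ (k:ℝ)^(β-1) * (W r n k * k) :=
            mul_le_mul_of_nonneg_right hle (mul_nonneg (hW k) hk0.le)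
        _ = W r n k * (k:ℝ)^β := by rw [hsplitk]; ring
    calc ((1-c)*n)^(β-1) * (n * r - TB r)
        ≤ ((1-c)*n)^(β-1) * ∑ k ∈ Fev r n, W r n k * k :=
          mul_le_mul_of_nonneg_left (sum_Fev_k_ge hr hr1 n hn1) hC0
      _ = ∑ k ∈ Fev r n, ((1-c)*n)^(β-1) * (W r n k * k) := by rw [Finset.mul_sum]
      _ ≤ ∑ k ∈ Fev r n, W r n k * (k:ℝ)^β := Finset.sum_le_sum hpt
  have hB : (0:ℝ) ≤ ∑ k ∈ (range (n+1)).filter (fun k : ℕ => ¬ (|(k:ℝ) - n*r| ≤ c * n)),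
      W r n k * (k:ℝ)^β := by
    refine Finset.sum_nonneg (fun k _ => mul_nonneg (hW k) (Real.rpow_nonneg (Nat.cast_nonneg k) _))
  have hkey : (r + δ) * (n:ℝ)^β ≤ ((1-c)*n)^(β-1) * (n * r - TB r) := by
    have hnsplit : (n:ℝ)^(β-1) * (n:ℝ) = (n:ℝ)^β := by
      nth_rewrite 2 [← Real.rpow_one (n:ℝ)]
      rw [← Real.rpow_add hn', sub_add_cancel]
    have hmul : ((1-c)*n)^(β-1) = θ * (n:ℝ)^(β-1) := by
      rw [Real.mul_rpow (by linarith : (0:ℝ) ≤ 1-c) hn'.le]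
    rw [hmul]
    have hTB' : θ * TB r ≤ δ * n := by
      rw [div_le_div_iff₀ hn' hθ0] at hTB
      linarith
    -- θ * n^(β-1) * (n r - TB) = θ r n^β - θ TB n^(β-1)
    have hnb1 : (0:ℝ) < (n:ℝ)^(β-1) := Real.rpow_pos_of_pos hn' _
    have expand : θ * (n:ℝ)^(β-1) * (n * r - TB r)
        = θ * r * (n:ℝ)^β - θ * TB r * (n:ℝ)^(β-1) := by
      rw [← hnsplit]; ring
    rw [expand]
    have h1 : θ * TB r * (n:ℝ)^(β-1) ≤ δ * n * (n:ℝ)^(β-1) :=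
      mul_le_mul_of_nonneg_right hTB' hnb1.le
    have h2 : δ * n * (n:ℝ)^(β-1) = δ * (n:ℝ)^β := by rw [← hnsplit]; ring
    have h3 : (r + δ) * (n:ℝ)^β = θ * r * (n:ℝ)^β - 2 * δ * (n:ℝ)^β + δ * (n:ℝ)^β := by
      have : r + δ = θ * r - 2*δ + δ := by rw [hδdef]; ring
      rw [this]; ring
    nlinarith [h1, h2, h3]
  linarith [hA, hB, hkey]

lemma core_log {r : ℝ} (hr : 0 < r) (hr1 : r < 1) :
    ∃ δ > 0, ∀ᶠ n : ℕ in atTop,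
      binomExp r n (fun k => (k:ℝ) * Real.log k) ≤ r * ((n:ℝ) * Real.log n) - δ * n := by
  have hc := cc_pos hr hr1
  have hc1 := cc_lt_one hr hr1
  have hTBpos := TB_pos hr hr1
  set c := cc r with hcdef
  set γ := -Real.log (1-c) with hγdef
  have hγ0 : 0 < γ := by
    rw [hγdef, neg_pos]
    exact Real.log_neg (by linarith) (by linarith)
  refine ⟨γ * r / 2, by positivity, ?_⟩
  set δ := γ * r / 2 with hδdef
  have hδ : 0 < δ := by positivity
  -- eventual smallness : γ * TB + TB * log n ≤ δ * n
  have hlog : (fun n : ℕ => Real.log n) =o[atTop] (fun n : ℕ => (n:ℝ)) :=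
    Real.isLittleO_log_id_atTop.comp_tendsto tendsto_natCast_atTop_atTop
  have hev1 : ∀ᶠ n : ℕ in atTop, TB r * Real.log n ≤ (δ/2) * n := by
    have h := hlog.def (c := δ/(2 * TB r)) (by positivity)
    filter_upwards [h, eventually_ge_atTop 1] with n hn hn1
    have hn' : (0:ℝ) < n := by exact_mod_cast hn1
    rw [Real.norm_eq_abs, Real.norm_eq_abs, abs_of_nonneg (Real.log_natCast_nonneg n),
      abs_of_nonneg hn'.le] at hn
    calc TB r * Real.log n ≤ TB r * (δ/(2*TB r) * n) := by
          exact mul_le_mul_of_nonneg_left hn hTBpos.le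
      _ = (δ/2) * n := by field_simp
  have hev2 : ∀ᶠ n : ℕ in atTop, γ * TB r ≤ (δ/2) * n := by
    have := tendsto_natCast_atTop_atTop (R := ℝ)
    filter_upwards [this.eventually_ge_atTop (2*(γ * TB r)/δ)] with n hn
    have hmul := mul_le_mul_of_nonneg_left hn (le_of_lt (by positivity : (0:ℝ) < δ/2))
    have e : (δ/2) * (2*(γ*TB r)/δ) = γ * TB r := by field_simp
    linarith
  filter_upwards [hev1, hev2, eventually_ge_atTop 1] with n h1 h2 hn1
  have hn' : (0:ℝ) < n := by exact_mod_cast hn1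
  have hW := W_nonneg hr.le hr1.le n
  have hlogn : (0:ℝ) ≤ Real.log n := Real.log_natCast_nonneg n
  rw [binomExp_eq_sum,
    ← Finset.sum_filter_add_sum_filter_not (range (n+1)) (fun k : ℕ => |(k:ℝ) - n*r| ≤ c * n)]
  have hFev : (range (n+1)).filter (fun k : ℕ => |(k:ℝ) - n*r| ≤ c * n) = Fev r n := rfl
  rw [hFev]
  have hA : ∑ k ∈ Fev r n, W r n k * ((k:ℝ) * Real.log k)
      ≤ Real.log n * (n * r) - γ * (n * r - TB r) := by
    have hpt : ∀ k ∈ Fev r n, W r n k * ((k:ℝ) * Real.log k)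
        ≤ (Real.log n - γ) * (W r n k * k) := by
      intro k hk
      obtain ⟨hk1, hk2, hk3⟩ := mem_Fev hr hr1 n hk
      have hk0 : (0:ℝ) < k := lt_of_lt_of_le (by positivity) hk1
      have hlogk : Real.log k ≤ Real.log n - γ := by
        have h5 : Real.log k ≤ Real.log ((1-c)*n) := Real.log_le_log hk0 hk2
        rw [Real.log_mul (by linarith) hn'.ne'] at h5
        rw [hγdef]; linarith
      calc W r n k * ((k:ℝ) * Real.log k) ≤ W r n k * ((k:ℝ) * (Real.log n - γ)) := by
            refine mul_le_mul_of_nonneg_left ?_ (hW k)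
            exact mul_le_mul_of_nonneg_left hlogk hk0.le
        _ = (Real.log n - γ) * (W r n k * k) := by ring
    calc ∑ k ∈ Fev r n, W r n k * ((k:ℝ) * Real.log k)
        ≤ ∑ k ∈ Fev r n, (Real.log n - γ) * (W r n k * k) := Finset.sum_le_sum hpt
      _ = Real.log n * (∑ k ∈ Fev r n, W r n k * k) - γ * (∑ k ∈ Fev r n, W r n k * k) := by
          rw [Finset.mul_sum, Finset.mul_sum, ← Finset.sum_sub_distrib]
          exact Finset.sum_congr rfl fun k _ => by ring
      _ ≤ Real.log n * (n * r) - γ * (n * r - TB r) := by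
          have hu := sum_Fev_k_le hr hr1 n
          have hl := sum_Fev_k_ge hr hr1 n hn1
          have e1 : Real.log n * (∑ k ∈ Fev r n, W r n k * k) ≤ Real.log n * (n * r) :=
            mul_le_mul_of_nonneg_left hu hlogn
          have e2 : γ * (n * r - TB r) ≤ γ * (∑ k ∈ Fev r n, W r n k * k) :=
            mul_le_mul_of_nonneg_left hl hγ0.le
          linarith
  have hB : ∑ k ∈ (range (n+1)).filter (fun k : ℕ => ¬ (|(k:ℝ) - n*r| ≤ c * n)),
      W r n k * ((k:ℝ) * Real.log k) ≤ TB r * Real.log n := by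
    calc ∑ k ∈ (range (n+1)).filter (fun k : ℕ => ¬ (|(k:ℝ) - n*r| ≤ c * n)),
          W r n k * ((k:ℝ) * Real.log k)
        ≤ ∑ k ∈ (range (n+1)).filter (fun k : ℕ => ¬ (|(k:ℝ) - n*r| ≤ c * n)),
            W r n k * ((n:ℝ) * Real.log n) := by
          refine Finset.sum_le_sum (fun k hk => ?_)
          rw [Finset.mem_filter, Finset.mem_range] at hk
          have hkn : (k:ℝ) ≤ n := by exact_mod_cast Nat.lt_succ_iff.1 hk.1
          refine mul_le_mul_of_nonneg_left ?_ (hW k)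
          rcases Nat.eq_zero_or_pos k with h0 | hkpos
          · subst h0; simp; positivity
          · have hk0 : (0:ℝ) < k := by exact_mod_cast hkpos
            calc (k:ℝ) * Real.log k ≤ (k:ℝ) * Real.log n :=
                  mul_le_mul_of_nonneg_left (Real.log_le_log hk0 hkn) hk0.le
              _ ≤ (n:ℝ) * Real.log n := mul_le_mul_of_nonneg_right hkn hlogn
      _ = (∑ k ∈ (range (n+1)).filter (fun k : ℕ => ¬ (|(k:ℝ) - n*r| ≤ c * n)), W r n k)
            * ((n:ℝ) * Real.log n) := by rw [Finset.sum_mul]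
      _ ≤ (TB r / n) * ((n:ℝ) * Real.log n) := by
          refine mul_le_mul_of_nonneg_right (sum_notFev_le hr hr1 n hn1) (by positivity)
      _ = TB r * Real.log n := by field_simp
  have final : Real.log n * (n * r) - γ * (n * r - TB r) + TB r * Real.log n
      ≤ r * ((n:ℝ) * Real.log n) - δ * n := by
    have : γ * r * n = 2 * δ * n := by rw [hδdef]; ring
    nlinarith [h1, h2]
  linarith [hA, hB, final]


lemma binomExp_mono {p : ℝ} (hp : 0 ≤ p) (hp1 : p ≤ 1) (n : ℕ) {f g : ℕ → ℝ}
    (h : ∀ k ≤ n, f k ≤ g k) : binomExp p n f ≤ binomExp p n g := by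
  rw [binomExp_eq_sum, binomExp_eq_sum]
  refine Finset.sum_le_sum (fun k hk => ?_)
  rw [Finset.mem_range] at hk
  exact mul_le_mul_of_nonneg_left (h k (by omega)) (W_nonneg hp hp1 n k)

lemma abs_binomExp_le {p : ℝ} (hp : 0 ≤ p) (hp1 : p ≤ 1) (n : ℕ) (f : ℕ → ℝ) :
    |binomExp p n f| ≤ binomExp p n (fun k => |f k|) := by
  rw [binomExp_eq_sum, binomExp_eq_sum]
  calc |∑ k ∈ range (n+1), W p n k * f k| ≤ ∑ k ∈ range (n+1), |W p n k * f k| :=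
        Finset.abs_sum_le_sum_abs _ _
    _ = ∑ k ∈ range (n+1), W p n k * |f k| := by
        refine Finset.sum_congr rfl (fun k _ => ?_)
        rw [abs_mul, abs_of_nonneg (W_nonneg hp hp1 n k)]

lemma binomExp_ite_top (p : ℝ) (n : ℕ) (d : ℝ) :
    binomExp p n (fun k => if k = n then d else 0) = p^n * d := by
  rw [binomExp_eq_sum]
  have : ∀ k ∈ range (n+1), W p n k * (if k = n then d else 0)
      = if k = n then W p n k * d else 0 := fun k _ => by split <;> simp
  rw [Finset.sum_congr rfl this, Finset.sum_ite_eq' (range (n+1)) n (fun k => W p n k * d)]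
  simp [W]

lemma binomExp_ite_zero (p : ℝ) (n : ℕ) (d : ℝ) :
    binomExp p n (fun k => if k = 0 then d else 0) = (1-p)^n * d := by
  rw [binomExp_eq_sum]
  have : ∀ k ∈ range (n+1), W p n k * (if k = 0 then d else 0)
      = if k = 0 then W p n k * d else 0 := fun k _ => by split <;> simp
  rw [Finset.sum_congr rfl this, Finset.sum_ite_eq' (range (n+1)) 0 (fun k => W p n k * d)]
  simp [W]

lemma main_ind (r : Fin 2 → ℝ) (hr : ∀ i, r i ∈ Set.Ioo (0:ℝ) 1)
    (a ε : Fin 2 → ℕ → ℝ)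
    (hrec : ∀ i : Fin 2, ∀ n : ℕ, 1 ≤ n →
      a i n = binomExp (r i) n (a 0) + binomExp (r i) n (fun k => a 1 (n - k)) + ε i n)
    (g : ℕ → ℝ) (N : ℕ) (hN : 2 ≤ N)
    (hgrow : ∀ i : Fin 2, ∀ n, N ≤ n →
      binomExp (r i) n g + binomExp (1 - r i) n g + |ε i n| ≤ g n)
    (hbase : ∀ i : Fin 2, ∀ n, n < N → |a i n| ≤ g n) :
    ∀ n, ∀ i, |a i n| ≤ g n := by
  intro n
  induction n using Nat.strong_induction_on with
  | _ n IH =>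
  rcases lt_or_ge n N with hn | hn
  · exact fun i => hbase i n hn
  have hn1 : 1 ≤ n := by omega
  have hn2 : 2 ≤ n := by omega
  set M : ℝ := max (|a 0 n|) (|a 1 n|) with hMdef
  set d : ℝ := max (M - g n) 0 with hddef
  have hd0 : 0 ≤ d := le_max_right _ _
  have key : ∀ i : Fin 2, |a i n| ≤ g n + ((r i)^n + (1 - r i)^n) * d := by
    intro i
    obtain ⟨hri0, hri1⟩ := hr i
    have hrec' := hrec i n hn1
    have step1 : |a i n| ≤ binomExp (r i) n (fun k => |a 0 k|)
        + binomExp (r i) n (fun k => |a 1 (n - k)|) + |ε i n| := by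
      rw [hrec']
      calc |binomExp (r i) n (a 0) + binomExp (r i) n (fun k => a 1 (n - k)) + ε i n|
          ≤ |binomExp (r i) n (a 0)| + |binomExp (r i) n (fun k => a 1 (n - k))| + |ε i n| := by
            exact (abs_add_le _ _).trans (add_le_add_left (abs_add_le _ _) _)
        _ ≤ _ := by
            refine add_le_add_left (add_le_add ?_ ?_) _
            · exact abs_binomExp_le hri0.le hri1.le n _
            · exact abs_binomExp_le hri0.le hri1.le n _
    have bound0 : ∀ k ≤ n, |a 0 k| ≤ g k + (if k = n then d else 0) := by
      intro k hk
      rcases eq_or_lt_of_le hk with rfl | hlt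
      · simp only [if_pos rfl]
        have h1 : |a 0 k| ≤ M := le_max_left _ _
        have h2 : M - g k ≤ d := le_max_left _ _
        simp
        linarith
      · simp only [if_neg (by omega : ¬ k = n)]
        simpa using IH k hlt 0
    have bound1 : ∀ k ≤ n, |a 1 (n - k)| ≤ g (n - k) + (if k = 0 then d else 0) := by
      intro k hk
      rcases Nat.eq_zero_or_pos k with rfl | hkpos
      · have h1 : |a 1 n| ≤ M := le_max_right _ _
        have h2 : M - g n ≤ d := le_max_left _ _
        simp only [Nat.sub_zero, if_pos rfl]
        simp
        linarith
      · simp only [if_neg (by omega : ¬ k = 0)]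
        simpa using IH (n - k) (by omega) 1
    have e0 : binomExp (r i) n (fun k => |a 0 k|)
        ≤ binomExp (r i) n g + (r i)^n * d := by
      calc binomExp (r i) n (fun k => |a 0 k|)
          ≤ binomExp (r i) n (fun k => g k + (if k = n then d else 0)) :=
            binomExp_mono hri0.le hri1.le n bound0
        _ = binomExp (r i) n g + (r i)^n * d := by
            rw [binomExp_add, binomExp_ite_top]
    have e1 : binomExp (r i) n (fun k => |a 1 (n - k)|)
        ≤ binomExp (1 - r i) n g + (1 - r i)^n * d := by
      calc binomExp (r i) n (fun k => |a 1 (n - k)|)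
          ≤ binomExp (r i) n (fun k => g (n - k) + (if k = 0 then d else 0)) := by
            refine binomExp_mono hri0.le hri1.le n bound1
        _ = binomExp (1 - r i) n g + (1 - r i)^n * d := by
            rw [binomExp_add, binomExp_ite_zero, binomExp_reflect]
    have := hgrow i n hn
    calc |a i n| ≤ _ := step1
      _ ≤ binomExp (r i) n g + binomExp (1 - r i) n g + |ε i n|
            + ((r i)^n + (1 - r i)^n) * d := by linarith [e0, e1]
      _ ≤ g n + ((r i)^n + (1 - r i)^n) * d := by linarith
  have hs : ∀ i : Fin 2, (r i)^n + (1 - r i)^n < 1 := by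
    intro i
    obtain ⟨hri0, hri1⟩ := hr i
    have h1 : (r i)^n ≤ (r i)^2 := pow_le_pow_of_le_one hri0.le hri1.le hn2
    have h2 : (1 - r i)^n ≤ (1 - r i)^2 := pow_le_pow_of_le_one (by linarith) (by linarith) hn2
    nlinarith
  have hM : M ≤ g n := by
    by_contra hcon
    push_neg at hcon
    have hdpos : d = M - g n := max_eq_left (by linarith)
    have : M = |a 0 n| ∨ M = |a 1 n| := max_choice _ _
    rcases this with h | h
    · have := key 0; have := hs 0
      have hp0 : (0:ℝ) ≤ (r 0)^n + (1 - r 0)^n := by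
        obtain ⟨h1, h2⟩ := hr 0
        exact add_nonneg (pow_nonneg h1.le _) (pow_nonneg (by linarith) _)
      nlinarith
    · have := key 1; have := hs 1
      have hp0 : (0:ℝ) ≤ (r 1)^n + (1 - r 1)^n := by
        obtain ⟨h1, h2⟩ := hr 1
        exact add_nonneg (pow_nonneg h1.le _) (pow_nonneg (by linarith) _)
      nlinarith
  intro i
  have : |a i n| ≤ M := by
    rcases (by omega : i = 0 ∨ i = 1) with rfl | rfl
    · exact le_max_left _ _
    · exact le_max_right _ _
  linarith


section case
variable (r : Fin 2 → ℝ) (hr : ∀ i, r i ∈ Set.Ioo (0:ℝ) 1)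
    (a ε : Fin 2 → ℕ → ℝ)
    (hrec : ∀ i : Fin 2, ∀ n : ℕ, 1 ≤ n →
      a i n = binomExp (r i) n (a 0) + binomExp (r i) n (fun k => a 1 (n - k)) + ε i n)

-- extraction of a uniform constant for ε
lemma eps_bound {α : ℝ} (hε : ∀ i : Fin 2, (fun n : ℕ => ε i n) =O[atTop] (fun n : ℕ => (n:ℝ) ^ α)) :
    ∃ C : ℝ, 0 ≤ C ∧ ∀ᶠ n : ℕ in atTop, |ε 0 n| ≤ C * (n:ℝ)^α ∧ |ε 1 n| ≤ C * (n:ℝ)^α := by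
  obtain ⟨c0, hc0⟩ := isBigO_iff.1 (hε 0)
  obtain ⟨c1, hc1⟩ := isBigO_iff.1 (hε 1)
  refine ⟨max (max c0 c1) 0, le_max_right _ _, ?_⟩
  filter_upwards [hc0, hc1] with n h0 h1
  have hnα : (0:ℝ) ≤ (n:ℝ)^α := Real.rpow_nonneg (Nat.cast_nonneg n) α
  rw [Real.norm_eq_abs, Real.norm_eq_abs, abs_of_nonneg hnα] at h0 h1
  constructor
  · exact le_trans h0 (mul_le_mul_of_nonneg_right (le_trans (le_max_left _ _) (le_max_left _ _)) hnα)
  · exact le_trans h1 (mul_le_mul_of_nonneg_right (le_trans (le_max_right _ _) (le_max_left _ _)) hnα)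

-- uniform bound on finitely many initial values
lemma base_bound (N : ℕ) : ∃ M : ℝ, 1 ≤ M ∧ ∀ i : Fin 2, ∀ n < N, |a i n| ≤ M := by
  refine ⟨1 + ∑ k ∈ range N, (|a 0 k| + |a 1 k|), le_add_of_nonneg_right (by positivity), ?_⟩
  intro i n hn
  have h1 : |a 0 n| + |a 1 n| ≤ ∑ k ∈ range N, (|a 0 k| + |a 1 k|) :=
    Finset.single_le_sum (f := fun k => |a 0 k| + |a 1 k|) (fun k _ => by positivity)
      (Finset.mem_range.2 hn)
  have h2 : |a i n| ≤ |a 0 n| + |a 1 n| := by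
    rcases (by omega : i = 0 ∨ i = 1) with rfl | rfl
    · linarith [abs_nonneg (a 1 n)]
    · linarith [abs_nonneg (a 0 n)]
  linarith

include hr hrec in
lemma case_up {α : ℝ} (hα : 1 < α)
    (hε : ∀ i : Fin 2, (fun n : ℕ => ε i n) =O[atTop] (fun n : ℕ => (n:ℝ) ^ α)) :
    ∀ i : Fin 2, (fun n : ℕ => a i n) =O[atTop] (fun n : ℕ => (n:ℝ) ^ α) := by
  obtain ⟨C, hC0, hCev⟩ := eps_bound ε hε
  obtain ⟨δ00, hδ00, hev00⟩ := core_up (hr 0).1 (hr 0).2 hα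
  obtain ⟨δ01, hδ01, hev01⟩ := core_up (r := 1 - r 0) (by have := (hr 0).2; linarith)
    (by have := (hr 0).1; linarith) hα
  obtain ⟨δ10, hδ10, hev10⟩ := core_up (hr 1).1 (hr 1).2 hα
  obtain ⟨δ11, hδ11, hev11⟩ := core_up (r := 1 - r 1) (by have := (hr 1).2; linarith)
    (by have := (hr 1).1; linarith) hα
  set δ : ℝ := min (δ00 + δ01) (δ10 + δ11) with hδdef
  have hδ : 0 < δ := lt_min (by linarith) (by linarith)
  obtain ⟨N0, hN0⟩ := eventually_atTop.1 (hCev.and (hev00.and (hev01.and (hev10.and hev11))))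
  set N : ℕ := max N0 2 with hNdef
  obtain ⟨M, hM1, hM⟩ := base_bound a N
  set K : ℝ := (M + C)/δ with hKdef
  have hK0 : 0 ≤ K := by positivity
  set g : ℕ → ℝ := fun n => K * (n:ℝ)^α + M with hgdef
  have hmain : ∀ n, ∀ i : Fin 2, |a i n| ≤ g n := by
    refine main_ind r hr a ε hrec g N (le_max_right _ _) ?_ ?_
    · intro i n hn
      obtain ⟨hεn, he00, he01, he10, he11⟩ := hN0 n (le_trans (le_max_left _ _) hn)
      have hn2 : 2 ≤ n := le_trans (le_max_right _ _) hn
      have hn1 : (1:ℝ) ≤ (n:ℝ) := by exact_mod_cast (by omega : 1 ≤ n)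
      have hnα1 : (1:ℝ) ≤ (n:ℝ)^α := Real.one_le_rpow hn1 (by linarith)
      have hexp : ∀ s : ℝ, binomExp s n g
          = K * binomExp s n (fun k => (k:ℝ)^α) + M := by
        intro s
        rw [hgdef]
        rw [show (fun n : ℕ => K * (n:ℝ)^α + M) = fun k : ℕ => K * (k:ℝ)^α + M from rfl]
        rw [binomExp_add, binomExp_smul, binomExp_const]
      have hi : binomExp (r i) n (fun k => (k:ℝ)^α) + binomExp (1 - r i) n (fun k => (k:ℝ)^α)
          ≤ (1 - δ) * (n:ℝ)^α := by
        rcases (by omega : i = 0 ∨ i = 1) with rfl | rfl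
        · have : δ ≤ δ00 + δ01 := min_le_left _ _
          nlinarith [he00, he01]
        · have : δ ≤ δ10 + δ11 := min_le_right _ _
          nlinarith [he10, he11]
      have hεi : |ε i n| ≤ C * (n:ℝ)^α := by
        rcases (by omega : i = 0 ∨ i = 1) with rfl | rfl
        · exact hεn.1
        · exact hεn.2
      rw [hexp, hexp]
      have hKδ : M + C * (n:ℝ)^α ≤ K * δ * (n:ℝ)^α := by
        have h1 : M + C * (n:ℝ)^α ≤ (M + C) * (n:ℝ)^α := by nlinarith
        have h2 : K * δ = M + C := by rw [hKdef]; field_simp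
        nlinarith
      have hsum := mul_le_mul_of_nonneg_left hi hK0
      rw [hgdef]
      simp only []
      nlinarith [hsum, hεi, hKδ]
    · intro i n hn
      have := hM i n hn
      have : (0:ℝ) ≤ K * (n:ℝ)^α := mul_nonneg hK0 (Real.rpow_nonneg (Nat.cast_nonneg n) α)
      rw [hgdef]
      simp only []
      linarith [hM i n hn]
  intro i
  rw [isBigO_iff]
  refine ⟨K + M, ?_⟩
  filter_upwards [eventually_ge_atTop 1] with n hn1
  have hn1' : (1:ℝ) ≤ (n:ℝ) := by exact_mod_cast hn1
  have hnα1 : (1:ℝ) ≤ (n:ℝ)^α := Real.one_le_rpow hn1' (by linarith)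
  have := hmain n i
  rw [hgdef] at this
  simp only [] at this
  rw [Real.norm_eq_abs, Real.norm_eq_abs, abs_of_nonneg (by linarith : (0:ℝ) ≤ (n:ℝ)^α)]
  nlinarith [this]

end case


section case
variable (r : Fin 2 → ℝ) (hr : ∀ i, r i ∈ Set.Ioo (0:ℝ) 1)
    (a ε : Fin 2 → ℕ → ℝ)
    (hrec : ∀ i : Fin 2, ∀ n : ℕ, 1 ≤ n →
      a i n = binomExp (r i) n (a 0) + binomExp (r i) n (fun k => a 1 (n - k)) + ε i n)

include hr hrec in
lemma case_low {α : ℝ} (hα : α < 1)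
    (hε : ∀ i : Fin 2, (fun n : ℕ => ε i n) =O[atTop] (fun n : ℕ => (n:ℝ) ^ α)) :
    ∀ i : Fin 2, (fun n : ℕ => a i n) =O[atTop] (fun n : ℕ => (n:ℝ)) := by
  obtain ⟨C, hC0, hCev⟩ := eps_bound ε hε
  set β : ℝ := (max α 0 + 1)/2 with hβdef
  have hβ0 : 0 < β := by
    have : (0:ℝ) ≤ max α 0 := le_max_right _ _
    rw [hβdef]; linarith
  have hβ1 : β < 1 := by
    have : max α 0 < 1 := max_lt hα one_pos
    rw [hβdef]; linarith
  have hαβ : α ≤ β := by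
    have : α ≤ max α 0 := le_max_left _ _
    have h2 : max α 0 < 1 := max_lt hα one_pos
    rw [hβdef]; linarith
  obtain ⟨δ00, hδ00, hev00⟩ := core_low (hr 0).1 (hr 0).2 hβ0 hβ1
  obtain ⟨δ01, hδ01, hev01⟩ := core_low (r := 1 - r 0) (by have := (hr 0).2; linarith)
    (by have := (hr 0).1; linarith) hβ0 hβ1
  obtain ⟨δ10, hδ10, hev10⟩ := core_low (hr 1).1 (hr 1).2 hβ0 hβ1
  obtain ⟨δ11, hδ11, hev11⟩ := core_low (r := 1 - r 1) (by have := (hr 1).2; linarith)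
    (by have := (hr 1).1; linarith) hβ0 hβ1
  set δ : ℝ := min (δ00 + δ01) (δ10 + δ11) with hδdef
  have hδ : 0 < δ := lt_min (by linarith) (by linarith)
  obtain ⟨N0, hN0⟩ := eventually_atTop.1 (hCev.and (hev00.and (hev01.and (hev10.and hev11))))
  set N : ℕ := max N0 2 with hNdef
  obtain ⟨M, hM1, hM⟩ := base_bound a N
  set L : ℝ := (M + C)/δ with hLdef
  have hL0 : 0 ≤ L := by positivity
  set g : ℕ → ℝ := fun n => L * n - L * (n:ℝ)^β + M with hgdef
  have hgeval : ∀ n : ℕ, g n = L * n - L * (n:ℝ)^β + M := fun n => rfl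
  have hmain : ∀ n, ∀ i : Fin 2, |a i n| ≤ g n := by
    refine main_ind r hr a ε hrec g N (le_max_right _ _) ?_ ?_
    · intro i n hn
      obtain ⟨hεn, he00, he01, he10, he11⟩ := hN0 n (le_trans (le_max_left _ _) hn)
      have hn2 : 2 ≤ n := le_trans (le_max_right _ _) hn
      have hn1 : (1:ℝ) ≤ (n:ℝ) := by exact_mod_cast (by omega : 1 ≤ n)
      have hnβ1 : (1:ℝ) ≤ (n:ℝ)^β := Real.one_le_rpow hn1 hβ0.le
      have hnαβ : (n:ℝ)^α ≤ (n:ℝ)^β := Real.rpow_le_rpow_of_exponent_le hn1 hαβ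
      have hexp : ∀ s : ℝ, binomExp s n g
          = L * (n * s) - L * binomExp s n (fun k => (k:ℝ)^β) + M := by
        intro s
        have : binomExp s n (fun k => L * (k:ℝ) + ((-L) * (k:ℝ)^β + M))
            = L * binomExp s n (fun k => (k:ℝ))
              + ((-L) * binomExp s n (fun k => (k:ℝ)^β) + M) := by
          rw [binomExp_add, binomExp_smul, binomExp_add, binomExp_smul, binomExp_const]
        rw [hgdef]
        calc binomExp s n (fun m : ℕ => L * (m:ℝ) - L * (m:ℝ)^β + M)
            = binomExp s n (fun k => L * (k:ℝ) + ((-L) * (k:ℝ)^β + M)) := by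
              congr 1; funext k; ring
          _ = _ := by rw [this, binomExp_id]; ring
      have hi : (1 + δ) * (n:ℝ)^β
          ≤ binomExp (r i) n (fun k => (k:ℝ)^β) + binomExp (1 - r i) n (fun k => (k:ℝ)^β) := by
        rcases (by omega : i = 0 ∨ i = 1) with rfl | rfl
        · have : δ ≤ δ00 + δ01 := min_le_left _ _
          nlinarith [he00, he01]
        · have : δ ≤ δ10 + δ11 := min_le_right _ _
          nlinarith [he10, he11]
      have hεi : |ε i n| ≤ C * (n:ℝ)^α := by
        rcases (by omega : i = 0 ∨ i = 1) with rfl | rfl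
        · exact hεn.1
        · exact hεn.2
      rw [hexp, hexp, hgeval]
      have hLδ : M + C * (n:ℝ)^α ≤ L * δ * (n:ℝ)^β := by
        have h1 : M + C * (n:ℝ)^α ≤ (M + C) * (n:ℝ)^β := by nlinarith
        have h2 : L * δ = M + C := by rw [hLdef]; field_simp
        nlinarith
      have hsum := mul_le_mul_of_nonneg_left hi hL0
      nlinarith [hsum, hεi, hLδ]
    · intro i n hn
      rw [hgeval]
      rcases Nat.eq_zero_or_pos n with rfl | hn1
      · simp only [Nat.cast_zero, Real.zero_rpow hβ0.ne', mul_zero, sub_zero, zero_add]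
        linarith [hM i 0 hn]
      · have hn1' : (1:ℝ) ≤ (n:ℝ) := by exact_mod_cast hn1
        have : (n:ℝ)^β ≤ (n:ℝ) := by
          have := Real.rpow_le_rpow_of_exponent_le hn1' hβ1.le
          rwa [Real.rpow_one] at this
        have h3 : (0:ℝ) ≤ L * n - L * (n:ℝ)^β := by nlinarith
        linarith [hM i n hn]
  intro i
  rw [isBigO_iff]
  refine ⟨L + M, ?_⟩
  filter_upwards [eventually_ge_atTop 1] with n hn1
  have hn1' : (1:ℝ) ≤ (n:ℝ) := by exact_mod_cast hn1
  have hnβ : (0:ℝ) ≤ (n:ℝ)^β := Real.rpow_nonneg (by linarith) β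
  have := hmain n i
  rw [hgeval] at this
  rw [Real.norm_eq_abs, Real.norm_eq_abs, abs_of_nonneg (by linarith : (0:ℝ) ≤ (n:ℝ))]
  nlinarith [this]

include hr hrec in
lemma case_log
    (hε : ∀ i : Fin 2, (fun n : ℕ => ε i n) =O[atTop] (fun n : ℕ => (n:ℝ) ^ (1:ℝ))) :
    ∀ i : Fin 2, (fun n : ℕ => a i n) =O[atTop] (fun n : ℕ => (n:ℝ) * Real.log n) := by
  obtain ⟨C, hC0, hCev⟩ := eps_bound ε hε
  obtain ⟨δ00, hδ00, hev00⟩ := core_log (hr 0).1 (hr 0).2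
  obtain ⟨δ01, hδ01, hev01⟩ := core_log (r := 1 - r 0) (by have := (hr 0).2; linarith)
    (by have := (hr 0).1; linarith)
  obtain ⟨δ10, hδ10, hev10⟩ := core_log (hr 1).1 (hr 1).2
  obtain ⟨δ11, hδ11, hev11⟩ := core_log (r := 1 - r 1) (by have := (hr 1).2; linarith)
    (by have := (hr 1).1; linarith)
  set δ : ℝ := min (δ00 + δ01) (δ10 + δ11) with hδdef
  have hδ : 0 < δ := lt_min (by linarith) (by linarith)
  obtain ⟨N0, hN0⟩ := eventually_atTop.1 (hCev.and (hev00.and (hev01.and (hev10.and hev11))))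
  set N : ℕ := max N0 2 with hNdef
  obtain ⟨M, hM1, hM⟩ := base_bound a N
  set K : ℝ := (M + C)/δ with hKdef
  have hK0 : 0 ≤ K := by positivity
  set g : ℕ → ℝ := fun n => K * ((n:ℝ) * Real.log n) + M * ((n:ℝ) + 1) with hgdef
  have hgeval : ∀ n : ℕ, g n = K * ((n:ℝ) * Real.log n) + M * ((n:ℝ) + 1) := fun n => rfl
  have hmain : ∀ n, ∀ i : Fin 2, |a i n| ≤ g n := by
    refine main_ind r hr a ε hrec g N (le_max_right _ _) ?_ ?_
    · intro i n hn
      obtain ⟨hεn, he00, he01, he10, he11⟩ := hN0 n (le_trans (le_max_left _ _) hn)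
      have hn2 : 2 ≤ n := le_trans (le_max_right _ _) hn
      have hn1 : (1:ℝ) ≤ (n:ℝ) := by exact_mod_cast (by omega : 1 ≤ n)
      have hexp : ∀ s : ℝ, binomExp s n g
          = K * binomExp s n (fun k => (k:ℝ) * Real.log k) + (M * (n * s) + M) := by
        intro s
        have h4 : binomExp s n (fun k => K * ((k:ℝ) * Real.log k) + (M * (k:ℝ) + M))
            = K * binomExp s n (fun k => (k:ℝ) * Real.log k)
              + (M * binomExp s n (fun k => (k:ℝ)) + M) := by
          rw [binomExp_add, binomExp_smul, binomExp_add, binomExp_smul, binomExp_const]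
        rw [hgdef]
        calc binomExp s n (fun m : ℕ => K * ((m:ℝ) * Real.log m) + M * ((m:ℝ) + 1))
            = binomExp s n (fun k => K * ((k:ℝ) * Real.log k) + (M * (k:ℝ) + M)) := by
              congr 1; funext k; ring
          _ = _ := by rw [h4, binomExp_id]
      have hi : binomExp (r i) n (fun k => (k:ℝ) * Real.log k)
            + binomExp (1 - r i) n (fun k => (k:ℝ) * Real.log k)
          ≤ (n:ℝ) * Real.log n - δ * n := by
        rcases (by omega : i = 0 ∨ i = 1) with rfl | rfl
        · have : δ ≤ δ00 + δ01 := min_le_left _ _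
          nlinarith [he00, he01]
        · have : δ ≤ δ10 + δ11 := min_le_right _ _
          nlinarith [he10, he11]
      have hεi : |ε i n| ≤ C * n := by
        have h5 : (n:ℝ)^(1:ℝ) = (n:ℝ) := Real.rpow_one _
        rcases (by omega : i = 0 ∨ i = 1) with rfl | rfl
        · have := hεn.1; rwa [h5] at this
        · have := hεn.2; rwa [h5] at this
      rw [hexp, hexp, hgeval]
      have hKδ : M + C * (n:ℝ) ≤ K * δ * (n:ℝ) := by
        have h1 : M + C * (n:ℝ) ≤ (M + C) * (n:ℝ) := by nlinarith
        have h2 : K * δ = M + C := by rw [hKdef]; field_simp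
        nlinarith
      have hsum := mul_le_mul_of_nonneg_left hi hK0
      nlinarith [hsum, hεi, hKδ]
    · intro i n hn
      rw [hgeval]
      have h1 : (0:ℝ) ≤ (n:ℝ) * Real.log n :=
        mul_nonneg (Nat.cast_nonneg n) (Real.log_natCast_nonneg n)
      have h2 : (1:ℝ) ≤ (n:ℝ) + 1 := by
        have := Nat.cast_nonneg (α := ℝ) n; linarith
      nlinarith [hM i n hn, hK0, hM1]
  intro i
  rw [isBigO_iff]
  refine ⟨K + 2*M, ?_⟩
  filter_upwards [eventually_ge_atTop 3] with n hn3
  have hn3' : (3:ℝ) ≤ (n:ℝ) := by exact_mod_cast hn3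
  have hlog1 : (1:ℝ) ≤ Real.log n := by
    have he : Real.exp 1 ≤ (n:ℝ) :=
      le_trans (le_of_lt (lt_trans Real.exp_one_lt_d9 (by norm_num))) hn3'
    calc (1:ℝ) = Real.log (Real.exp 1) := (Real.log_exp 1).symm
      _ ≤ Real.log n := Real.log_le_log (Real.exp_pos 1) he
  have h1 : (0:ℝ) ≤ (n:ℝ) * Real.log n := by nlinarith
  have := hmain n i
  rw [hgeval] at this
  rw [Real.norm_eq_abs, Real.norm_eq_abs, abs_of_nonneg h1]
  have h2 : (n:ℝ) ≤ (n:ℝ) * Real.log n := by nlinarith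
  have h3 : (n:ℝ) + 1 ≤ 2 * (n:ℝ) := by linarith
  have h4 : M * ((n:ℝ)+1) ≤ 2 * M * ((n:ℝ) * Real.log n) := by nlinarith
  linarith [this, h4]

end case

theorem stmt0 (p : Fin 2 → Fin 2 → ℝ)
    (hp : ∀ i j, p i j ∈ Set.Ioo (0 : ℝ) 1)
    (hsum : ∀ i, p i 0 + p i 1 = 1)
    (a ε : Fin 2 → ℕ → ℝ) (α : ℝ)
    (hrec : ∀ i : Fin 2, ∀ n : ℕ, 1 ≤ n →
      a i n = binomExp (p i 0) n (a 0) + binomExp (p i 0) n (fun k => a 1 (n - k)) + ε i n)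
    (hε : ∀ i : Fin 2, (fun n : ℕ => ε i n) =O[atTop] (fun n : ℕ => (n : ℝ) ^ α)) :
    (α < 1 → ∀ i : Fin 2, (fun n : ℕ => a i n) =O[atTop] (fun n : ℕ => (n : ℝ))) ∧
    (α > 1 → ∀ i : Fin 2, (fun n : ℕ => a i n) =O[atTop] (fun n : ℕ => (n : ℝ) ^ α)) ∧
    (α = 1 → ∀ i : Fin 2, (fun n : ℕ => a i n) =O[atTop]
      (fun n : ℕ => (n : ℝ) * Real.log n)) := by
  have hr : ∀ i : Fin 2, (fun i => p i 0) i ∈ Set.Ioo (0:ℝ) 1 := fun i => hp i 0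
  refine ⟨fun hα => case_low (fun i => p i 0) hr a ε hrec hα hε,
      fun hα => case_up (fun i => p i 0) hr a ε hrec hα hε,
      fun hα => ?_⟩
  subst hα
  exact case_log (fun i => p i 0) hr a ε hrec hε
end

section
/- Let a_0, a_1 : ℕ → ℝ and ε_0, ε_1 : ℕ → ℝ be sequences satisfying, for all n ≥ 1 and i ∈ {0,1}, the recurrence a_i(n) = p_{i0} E[a_0(I_n^i)] + p_{i1} E[a_1(n − I_n^i)] + ε_i(n), where I_n^i is a binomial B(n, p_{i0}) random variable. If ε_i(n) = O(n^α) as n → ∞ for some fixed α ∈ ℝ and both i ∈ {0,1}, then as n → ∞: a_i(n) = O(1) if α < 0; a_i(n) = O(n^α) if α > 0; and a_i(n) = O(log n) if α = 0. -/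
open Filter Asymptotics Real

/-- binomial weight -/
noncomputable def bw (p : ℝ) (n k : ℕ) : ℝ := (n.choose k : ℝ) * p ^ k * (1 - p) ^ (n - k)

lemma bw_nonneg {p : ℝ} (h0 : 0 ≤ p) (h1 : p ≤ 1) (n k : ℕ) : 0 ≤ bw p n k := by
  unfold bw
  have : (0:ℝ) ≤ 1 - p := by linarith
  positivity

lemma bw_sum (p : ℝ) (n : ℕ) : ∑ k ∈ Finset.range (n + 1), bw p n k = 1 := by
  have h := add_pow p (1 - p) n
  have h2 : p + (1 - p) = 1 := by ring
  rw [h2, one_pow] at h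
  rw [h]
  apply Finset.sum_congr rfl
  intro k _
  unfold bw
  ring

lemma bw_mean {p : ℝ} (n : ℕ) :
    ∑ k ∈ Finset.range (n + 1), (k : ℝ) * bw p n k = n * p := by
  induction n with
  | zero => simp
  | succ m _ =>
    rw [Finset.sum_range_succ']
    have step : ∀ i ∈ Finset.range (m + 1),
        ((i + 1 : ℕ) : ℝ) * bw p (m + 1) (i + 1) = ((m:ℝ) + 1) * p * bw p m i := by
      intro i _
      unfold bw
      have hn : ((m+1) * m.choose i : ℕ) = ((m+1).choose (i+1) * (i+1) : ℕ) :=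
        Nat.add_one_mul_choose_eq m i
      have hc : ((m+1 : ℕ):ℝ) * (m.choose i : ℝ) = ((m+1).choose (i+1) : ℝ) * ((i:ℝ)+1) := by
        exact_mod_cast congrArg (Nat.cast (R := ℝ)) hn
    -- exponents: (m+1) - (i+1) = m - i
      have he : (m + 1) - (i + 1) = m - i := by omega
      rw [he, pow_succ]
      push_cast at hc ⊢
      linear_combination (-(p ^ i * p * (1 - p) ^ (m - i))) * hc
    rw [Finset.sum_congr rfl step]
    rw [← Finset.mul_sum, bw_sum]
    push_cast
    ring

lemma bw_sq {p : ℝ} (n : ℕ) :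
    ∑ k ∈ Finset.range (n + 1), (k : ℝ) * ((k:ℝ) - 1) * bw p n k = n * ((n:ℝ) - 1) * p ^ 2 := by
  induction n with
  | zero => simp
  | succ m _ =>
    rw [Finset.sum_range_succ']
    have step : ∀ i ∈ Finset.range (m + 1),
        ((i + 1 : ℕ) : ℝ) * (((i + 1 : ℕ):ℝ) - 1) * bw p (m + 1) (i + 1)
          = ((m:ℝ) + 1) * p * ((i:ℝ) * bw p m i) := by
      intro i _
      unfold bw
      have hn : ((m+1) * m.choose i : ℕ) = ((m+1).choose (i+1) * (i+1) : ℕ) :=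
        Nat.add_one_mul_choose_eq m i
      have hc : ((m+1 : ℕ):ℝ) * (m.choose i : ℝ) = ((m+1).choose (i+1) : ℝ) * ((i:ℝ)+1) := by
        exact_mod_cast congrArg (Nat.cast (R := ℝ)) hn
      have he : (m + 1) - (i + 1) = m - i := by omega
      rw [he, pow_succ]
      push_cast at hc ⊢
      linear_combination (-((↑i:ℝ) * p ^ i * p * (1 - p) ^ (m - i))) * hc
    rw [Finset.sum_congr rfl step]
    rw [← Finset.mul_sum, bw_mean]
    push_cast
    ring

lemma bw_var {p : ℝ} (n : ℕ) :
    ∑ k ∈ Finset.range (n + 1), ((k : ℝ) - n * p) ^ 2 * bw p n k = n * p * (1 - p) := by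
  have expand : ∀ k ∈ Finset.range (n+1),
      ((k : ℝ) - n * p) ^ 2 * bw p n k
        = (k:ℝ) * ((k:ℝ) - 1) * bw p n k + (1 - 2 * n * p) * ((k:ℝ) * bw p n k)
          + ((n:ℝ) * p) ^ 2 * bw p n k := by
    intro k _; ring
  rw [Finset.sum_congr rfl expand, Finset.sum_add_distrib, Finset.sum_add_distrib,
    ← Finset.mul_sum, ← Finset.mul_sum, bw_sq, bw_mean, bw_sum]
  ring
lemma bw_cheb {p : ℝ} (h0 : 0 ≤ p) (h1 : p ≤ 1) (n : ℕ) (P : ℕ → Prop) [DecidablePred P]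
    {r : ℝ} (hr : 0 < r) (hP : ∀ k ∈ Finset.range (n+1), P k → r ≤ |(k:ℝ) - n * p|) :
    ∑ k ∈ (Finset.range (n+1)).filter P, bw p n k ≤ n * p * (1 - p) / r ^ 2 := by
  have key : ∑ k ∈ (Finset.range (n+1)).filter P, bw p n k
      ≤ ∑ k ∈ (Finset.range (n+1)).filter P, ((k:ℝ) - n*p)^2 / r^2 * bw p n k := by
    apply Finset.sum_le_sum
    intro k hk
    obtain ⟨hk1, hk2⟩ := Finset.mem_filter.1 hk
    have h3 := hP k hk1 hk2
    have h4 : r^2 ≤ ((k:ℝ) - n*p)^2 := by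
      have := abs_nonneg ((k:ℝ) - n*p)
      nlinarith [sq_abs ((k:ℝ) - n*p)]
    have h5 : (1:ℝ) ≤ ((k:ℝ) - n*p)^2 / r^2 := (one_le_div (by positivity)).2 h4
    nlinarith [bw_nonneg h0 h1 n k]
  have key2 : ∑ k ∈ (Finset.range (n+1)).filter P, ((k:ℝ) - n*p)^2 / r^2 * bw p n k
      ≤ ∑ k ∈ Finset.range (n+1), ((k:ℝ) - n*p)^2 / r^2 * bw p n k := by
    apply Finset.sum_le_sum_of_subset_of_nonneg (Finset.filter_subset _ _)
    intro k _ _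
    have := bw_nonneg h0 h1 n k
    positivity
  have key3 : ∑ k ∈ Finset.range (n+1), ((k:ℝ) - n*p)^2 / r^2 * bw p n k
      = n * p * (1 - p) / r ^ 2 := by
    rw [← bw_var (p := p) n, Finset.sum_div]
    apply Finset.sum_congr rfl
    intro k _; ring
  linarith

lemma E_split_le {p : ℝ} (h0 : 0 ≤ p) (h1 : p ≤ 1) (n : ℕ) (f : ℕ → ℝ) (A B r : ℝ)
    (hr : 0 < r) (hA : 0 ≤ A) (hAB : A ≤ B)
    (hf1 : ∀ k ≤ n, |(k:ℝ) - n * p| < r → f k ≤ A) (hf2 : ∀ k ≤ n, f k ≤ B) :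
    ∑ k ∈ Finset.range (n+1), bw p n k * f k ≤ A + n * p * (1 - p) / r ^ 2 * B := by
  classical
  rw [← Finset.sum_filter_add_sum_filter_not (Finset.range (n+1))
    (fun k => |(k:ℝ) - n * p| < r)]
  have hS : ∑ k ∈ (Finset.range (n+1)).filter (fun (k : ℕ) => |(k:ℝ) - n * p| < r),
      bw p n k * f k ≤ A := by
    calc _ ≤ ∑ k ∈ (Finset.range (n+1)).filter (fun (k : ℕ) => |(k:ℝ) - n * p| < r),
        bw p n k * A := by
          apply Finset.sum_le_sum
          intro k hk
          obtain ⟨hk1, hk2⟩ := Finset.mem_filter.1 hk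
          exact mul_le_mul_of_nonneg_left
            (hf1 k (Finset.mem_range_succ_iff.1 hk1) hk2) (bw_nonneg h0 h1 n k)
      _ = (∑ k ∈ (Finset.range (n+1)).filter (fun (k : ℕ) => |(k:ℝ) - n * p| < r),
        bw p n k) * A := by rw [Finset.sum_mul]
      _ ≤ 1 * A := by
          apply mul_le_mul_of_nonneg_right _ hA
          calc _ ≤ ∑ k ∈ Finset.range (n+1), bw p n k :=
                Finset.sum_le_sum_of_subset_of_nonneg (Finset.filter_subset _ _)
                  (fun k _ _ => bw_nonneg h0 h1 n k)
            _ = 1 := bw_sum p n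
      _ = A := one_mul A
  have hT : ∑ k ∈ (Finset.range (n+1)).filter (fun (k : ℕ) => ¬ |(k:ℝ) - n * p| < r),
      bw p n k * f k ≤ n * p * (1 - p) / r ^ 2 * B := by
    have hB : 0 ≤ B := le_trans hA hAB
    calc _ ≤ ∑ k ∈ (Finset.range (n+1)).filter (fun (k : ℕ) => ¬ |(k:ℝ) - n * p| < r),
        bw p n k * B := by
          apply Finset.sum_le_sum
          intro k hk
          obtain ⟨hk1, hk2⟩ := Finset.mem_filter.1 hk
          exact mul_le_mul_of_nonneg_left
            (hf2 k (Finset.mem_range_succ_iff.1 hk1)) (bw_nonneg h0 h1 n k)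
      _ = (∑ k ∈ (Finset.range (n+1)).filter (fun (k : ℕ) => ¬ |(k:ℝ) - n * p| < r),
        bw p n k) * B := by rw [Finset.sum_mul]
      _ ≤ n * p * (1 - p) / r ^ 2 * B := by
          apply mul_le_mul_of_nonneg_right _ hB
          exact bw_cheb h0 h1 n _ hr (fun k _ hk => not_lt.1 hk)
  linarith

lemma E_split_ge {p : ℝ} (h0 : 0 ≤ p) (h1 : p ≤ 1) (n : ℕ) (f : ℕ → ℝ) (A r : ℝ)
    (hr : 0 < r) (hA : 0 ≤ A)
    (hf1 : ∀ k ≤ n, |(k:ℝ) - n * p| < r → A ≤ f k) (hf0 : ∀ k ≤ n, 0 ≤ f k) :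
    A * (1 - n * p * (1 - p) / r ^ 2) ≤ ∑ k ∈ Finset.range (n+1), bw p n k * f k := by
  classical
  have hsplit := Finset.sum_filter_add_sum_filter_not (Finset.range (n+1))
    (fun k => |(k:ℝ) - n * p| < r) (fun k => bw p n k * f k)
  have hT0 : 0 ≤ ∑ k ∈ (Finset.range (n+1)).filter (fun (k : ℕ) => ¬ |(k:ℝ) - n * p| < r),
      bw p n k * f k :=
    Finset.sum_nonneg (fun k hk => mul_nonneg (bw_nonneg h0 h1 n k)
      (hf0 k (Finset.mem_range_succ_iff.1 (Finset.mem_filter.1 hk).1)))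
  have hwsplit := Finset.sum_filter_add_sum_filter_not (Finset.range (n+1))
    (fun k => |(k:ℝ) - n * p| < r) (fun k => bw p n k)
  rw [bw_sum] at hwsplit
  have hTw : ∑ k ∈ (Finset.range (n+1)).filter (fun (k : ℕ) => ¬ |(k:ℝ) - n * p| < r),
      bw p n k ≤ n * p * (1 - p) / r ^ 2 :=
    bw_cheb h0 h1 n _ hr (fun k _ hk => not_lt.1 hk)
  have hS : A * (1 - n * p * (1 - p) / r ^ 2)
      ≤ ∑ k ∈ (Finset.range (n+1)).filter (fun (k : ℕ) => |(k:ℝ) - n * p| < r),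
        bw p n k * f k := by
    calc A * (1 - n * p * (1 - p) / r ^ 2)
        ≤ A * (∑ k ∈ (Finset.range (n+1)).filter (fun (k : ℕ) => |(k:ℝ) - n * p| < r),
          bw p n k) := by
          apply mul_le_mul_of_nonneg_left _ hA
          linarith
      _ = ∑ k ∈ (Finset.range (n+1)).filter (fun (k : ℕ) => |(k:ℝ) - n * p| < r),
          A * bw p n k := by rw [Finset.mul_sum]
      _ ≤ _ := by
          apply Finset.sum_le_sum
          intro k hk
          obtain ⟨hk1, hk2⟩ := Finset.mem_filter.1 hk
          rw [mul_comm A]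
          exact mul_le_mul_of_nonneg_left
            (hf1 k (Finset.mem_range_succ_iff.1 hk1) hk2) (bw_nonneg h0 h1 n k)
  linarith
lemma key1 {p : ℝ} (hp0 : 0 < p) (hp1 : p < 1) {n k : ℕ} (hn : 1 ≤ n) (hk : k ≤ n)
    (h : |(k:ℝ) - n * p| < (1 - p)/2 * n) :
    (k:ℝ) + 1 ≤ (3 + p)/4 * ((n:ℝ) + 1) := by
  have h1 : (k:ℝ) - n * p < (1 - p)/2 * n := lt_of_abs_lt h
  have hn1 : (1:ℝ) ≤ n := by exact_mod_cast hn
  nlinarith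

lemma key2 {p : ℝ} (hp0 : 0 < p) (hp1 : p < 1) {n k : ℕ} (hn : 1 ≤ n) (hk : k ≤ n)
    (h : |(k:ℝ) - n * p| < p/2 * n) :
    ((n - k : ℕ):ℝ) + 1 ≤ (4 - p)/4 * ((n:ℝ) + 1) := by
  have h1 : -(p/2 * n) < (k:ℝ) - n * p := neg_lt_of_abs_lt h
  have hn1 : (1:ℝ) ≤ n := by exact_mod_cast hn
  have hc : ((n - k : ℕ):ℝ) = (n:ℝ) - k := by
    rw [Nat.cast_sub hk]
  rw [hc]
  nlinarith

lemma contr_pos (p α : ℝ) (hp : p ∈ Set.Ioo (0:ℝ) 1) (hα : 0 < α) :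
    ∃ c > 0, ∀ᶠ n : ℕ in atTop,
      p * (∑ k ∈ Finset.range (n+1), bw p n k * (((k:ℝ)+1) ^ α))
      + (1-p) * (∑ k ∈ Finset.range (n+1), bw p n k * ((((n-k : ℕ):ℝ)+1) ^ α))
      ≤ (((n:ℝ)+1) ^ α) - c * (n:ℝ) ^ α := by
  obtain ⟨hp0, hp1⟩ := hp
  set q : ℝ := 1 - p with hq
  have hq0 : 0 < q := by simp [hq]; linarith
  set t2 : ℝ := ((3 + p)/4) ^ α with ht2def
  set t2' : ℝ := ((4 - p)/4) ^ α with ht2'def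
  have h21 : t2 < 1 := Real.rpow_lt_one (by linarith) (by linarith) hα
  have h21' : t2' < 1 := Real.rpow_lt_one (by linarith) (by linarith) hα
  have h20 : 0 ≤ t2 := Real.rpow_nonneg (by linarith) _
  have h20' : 0 ≤ t2' := Real.rpow_nonneg (by linarith) _
  set ρ : ℝ := p * t2 + q * t2' with hρdef
  have hρ1 : ρ < 1 := by
    have : ρ < p * 1 + q * 1 := by
      apply add_lt_add
      · exact mul_lt_mul_of_pos_left h21 hp0
      · exact mul_lt_mul_of_pos_left h21' hq0
    linarith [this, show p * 1 + q * 1 = 1 by rw [hq]; ring]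
  set C₂ : ℝ := 4 * p^2 / q + 4 * q^2 / p with hC₂
  have hC₂0 : 0 ≤ C₂ := by positivity
  clear_value ρ C₂
  refine ⟨(1 - ρ)/2, by linarith, ?_⟩
  filter_upwards [eventually_ge_atTop 1,
    eventually_ge_atTop (⌈2 * C₂ / (1 - ρ)⌉₊ + 1)] with n hn1 hn2
  have hnR : (1:ℝ) ≤ n := by exact_mod_cast hn1
  have hnpos : (0:ℝ) < n := by linarith
  have hCn : C₂ / n ≤ (1 - ρ)/2 := by
    rw [div_le_iff₀ hnpos]
    have h1 : (⌈2 * C₂ / (1 - ρ)⌉₊ : ℝ) ≤ n := by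
      have : (⌈2 * C₂ / (1 - ρ)⌉₊ : ℕ) ≤ n := by omega
      exact_mod_cast this
    have h2 : 2 * C₂ / (1 - ρ) ≤ n := (Nat.le_ceil _).trans h1
    rw [div_le_iff₀ (by linarith)] at h2
    nlinarith [h2]
  set X : ℝ := ((n:ℝ)+1) ^ α with hX
  have hX0 : (0:ℝ) ≤ X := Real.rpow_nonneg (by linarith) _
  have hnX : (n:ℝ) ^ α ≤ X := Real.rpow_le_rpow (by linarith) (by linarith) hα.le
  -- first sum
  have hr1 : (0:ℝ) < q/2 * n := by positivity
  have hS1 : ∑ k ∈ Finset.range (n+1), bw p n k * (((k:ℝ)+1) ^ α)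
      ≤ t2 * X + (n * p * (1 - p) / (q/2 * n)^2) * X := by
    apply E_split_le hp0.le hp1.le n _ _ _ _ hr1
    · positivity
    · calc t2 * X ≤ 1 * X := mul_le_mul_of_nonneg_right h21.le hX0
        _ = X := one_mul X
    · intro k hk hd
      have h1 := key1 hp0 hp1 hn1 hk hd
      calc ((k:ℝ)+1) ^ α ≤ ((3 + p)/4 * ((n:ℝ) + 1)) ^ α :=
            Real.rpow_le_rpow (by positivity) h1 hα.le
        _ = t2 * X := Real.mul_rpow (by linarith) (by linarith)
    · intro k hk
      apply Real.rpow_le_rpow (by positivity) _ hα.le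
      have : (k:ℝ) ≤ n := by exact_mod_cast hk
      linarith
  -- second sum
  have hr2 : (0:ℝ) < p/2 * n := by positivity
  have hS2 : ∑ k ∈ Finset.range (n+1), bw p n k * ((((n-k : ℕ):ℝ)+1) ^ α)
      ≤ t2' * X + (n * p * (1 - p) / (p/2 * n)^2) * X := by
    apply E_split_le hp0.le hp1.le n _ _ _ _ hr2
    · positivity
    · calc t2' * X ≤ 1 * X := mul_le_mul_of_nonneg_right h21'.le hX0
        _ = X := one_mul X
    · intro k hk hd
      have h1 := key2 hp0 hp1 hn1 hk hd
      calc (((n-k:ℕ):ℝ)+1) ^ α ≤ ((4 - p)/4 * ((n:ℝ) + 1)) ^ α :=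
            Real.rpow_le_rpow (by positivity) h1 hα.le
        _ = t2' * X := Real.mul_rpow (by linarith) (by linarith)
    · intro k hk
      apply Real.rpow_le_rpow (by positivity) _ hα.le
      have : ((n - k : ℕ):ℝ) ≤ n := by exact_mod_cast Nat.sub_le n k
      linarith
  -- combine
  have ht : p * (n * p * (1 - p) / (q/2 * n)^2) + q * (n * p * (1 - p) / (p/2 * n)^2)
      = C₂ / n := by
    rw [hC₂]
    field_simp
    ring
  have key : p * (t2 * X + (n * p * (1 - p) / (q/2 * n)^2) * X)
      + q * (t2' * X + (n * p * (1 - p) / (p/2 * n)^2) * X)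
      = (ρ + C₂/n) * X := by
    rw [hρdef, ← ht]; ring
  have hfin : (ρ + C₂/n) * X ≤ X - (1-ρ)/2 * (n:ℝ) ^ α := by
    have h1 : (ρ + C₂/n) * X ≤ (ρ + (1-ρ)/2) * X := by
      apply mul_le_mul_of_nonneg_right _ hX0
      linarith
    have h2 : (ρ + (1-ρ)/2) * X = X - (1-ρ)/2 * X := by ring
    have h3 : (1-ρ)/2 * (n:ℝ) ^ α ≤ (1-ρ)/2 * X :=
      mul_le_mul_of_nonneg_left hnX (by linarith)
    linarith
  calc p * (∑ k ∈ Finset.range (n+1), bw p n k * (((k:ℝ)+1) ^ α))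
      + q * (∑ k ∈ Finset.range (n+1), bw p n k * ((((n-k : ℕ):ℝ)+1) ^ α))
      ≤ p * (t2 * X + (n * p * (1 - p) / (q/2 * n)^2) * X)
        + q * (t2' * X + (n * p * (1 - p) / (p/2 * n)^2) * X) := by
        apply add_le_add
        · exact mul_le_mul_of_nonneg_left hS1 hp0.le
        · exact mul_le_mul_of_nonneg_left hS2 hq0.le
    _ = (ρ + C₂/n) * X := key
    _ ≤ X - (1-ρ)/2 * (n:ℝ) ^ α := hfin
set_option maxHeartbeats 1000000 in
lemma contr_neg (p α : ℝ) (hp : p ∈ Set.Ioo (0:ℝ) 1) (hα : α < 0) :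
    ∃ c > 0, ∀ᶠ n : ℕ in atTop,
      p * (∑ k ∈ Finset.range (n+1), bw p n k * (2 - ((k:ℝ)+1) ^ α))
      + (1-p) * (∑ k ∈ Finset.range (n+1), bw p n k * (2 - (((n-k : ℕ):ℝ)+1) ^ α))
      ≤ (2 - ((n:ℝ)+1) ^ α) - c * (n:ℝ) ^ α := by
  obtain ⟨hp0, hp1⟩ := hp
  set q : ℝ := 1 - p with hq
  have hq0 : 0 < q := by simp only [hq]; linarith
  set t2 : ℝ := ((3 + p)/4) ^ α with ht2def
  set t2' : ℝ := ((4 - p)/4) ^ α with ht2'def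
  have h21 : 1 < t2 := by
    rw [ht2def, Real.one_lt_rpow_iff_of_pos (by linarith)]
    right; constructor <;> linarith
  have h21' : 1 < t2' := by
    rw [ht2'def, Real.one_lt_rpow_iff_of_pos (by linarith)]
    right; constructor <;> linarith
  set ρ : ℝ := p * t2 + q * t2' with hρdef
  have hρ1 : 1 < ρ := by
    have h1 : p * 1 < p * t2 := mul_lt_mul_of_pos_left h21 hp0
    have h2 : q * 1 < q * t2' := mul_lt_mul_of_pos_left h21' hq0
    have : p * 1 + q * 1 = 1 := by rw [hq]; ring
    linarith
  set C₃ : ℝ := 4 * p^2 / q * t2 + 4 * q^2 / p * t2' with hC₃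
  have hC₃0 : 0 ≤ C₃ := by
    have ha : (0:ℝ) ≤ 4 * p^2 / q := by positivity
    have hb : (0:ℝ) ≤ 4 * q^2 / p := by positivity
    have h1 := mul_nonneg ha (by linarith : (0:ℝ) ≤ t2)
    have h2 := mul_nonneg hb (by linarith : (0:ℝ) ≤ t2')
    rw [hC₃]; linarith
  set c : ℝ := (ρ - 1)/2 * (2:ℝ) ^ α with hcdef
  have hc0 : 0 < c := by
    have : (0:ℝ) < (2:ℝ) ^ α := Real.rpow_pos_of_pos (by norm_num) α
    rw [hcdef]
    exact mul_pos (by linarith) this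
  clear_value ρ C₃ c
  refine ⟨c, hc0, ?_⟩
  filter_upwards [eventually_ge_atTop 1,
    eventually_ge_atTop (⌈2 * C₃ / (ρ - 1)⌉₊ + 1)] with n hn1 hn2
  have hnR : (1:ℝ) ≤ n := by exact_mod_cast hn1
  have hnpos : (0:ℝ) < n := by linarith
  have hCn : C₃ / n ≤ (ρ - 1)/2 := by
    rw [div_le_iff₀ hnpos]
    have h1 : (⌈2 * C₃ / (ρ - 1)⌉₊ : ℝ) ≤ n := by
      have : (⌈2 * C₃ / (ρ - 1)⌉₊ : ℕ) ≤ n := by omega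
      exact_mod_cast this
    have h2 : 2 * C₃ / (ρ - 1) ≤ n := (Nat.le_ceil _).trans h1
    rw [div_le_iff₀ (by linarith)] at h2
    nlinarith [h2]
  set X : ℝ := ((n:ℝ)+1) ^ α with hX
  have hX0 : (0:ℝ) < X := Real.rpow_pos_of_pos (by linarith) _
  have hnX : (2:ℝ) ^ α * (n:ℝ) ^ α ≤ X := by
    rw [hX, ← Real.mul_rpow (by norm_num) (by linarith)]
    exact Real.rpow_le_rpow_of_nonpos (by linarith) (by linarith) hα.le
  clear_value X t2 t2'
  -- rewrite sums
  have rw1 : ∑ k ∈ Finset.range (n+1), bw p n k * (2 - ((k:ℝ)+1) ^ α)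
      = 2 - ∑ k ∈ Finset.range (n+1), bw p n k * (((k:ℝ)+1) ^ α) := by
    have : ∀ k ∈ Finset.range (n+1), bw p n k * (2 - ((k:ℝ)+1) ^ α)
        = 2 * bw p n k - bw p n k * (((k:ℝ)+1) ^ α) := fun k _ => by ring
    rw [Finset.sum_congr rfl this, Finset.sum_sub_distrib, ← Finset.mul_sum, bw_sum, mul_one]
  have rw2 : ∑ k ∈ Finset.range (n+1), bw p n k * (2 - (((n-k:ℕ):ℝ)+1) ^ α)
      = 2 - ∑ k ∈ Finset.range (n+1), bw p n k * ((((n-k:ℕ):ℝ)+1) ^ α) := by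
    have : ∀ k ∈ Finset.range (n+1), bw p n k * (2 - (((n-k:ℕ):ℝ)+1) ^ α)
        = 2 * bw p n k - bw p n k * ((((n-k:ℕ):ℝ)+1) ^ α) := fun k _ => by ring
    rw [Finset.sum_congr rfl this, Finset.sum_sub_distrib, ← Finset.mul_sum, bw_sum, mul_one]
  rw [rw1, rw2]
  -- lower bounds on the two expectations
  have hr1 : (0:ℝ) < q/2 * n := by positivity
  have hS1 : (t2 * X) * (1 - n * p * (1 - p) / (q/2 * n)^2)
      ≤ ∑ k ∈ Finset.range (n+1), bw p n k * (((k:ℝ)+1) ^ α) := by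
    apply E_split_ge hp0.le hp1.le n _ _ _ hr1
    · positivity
    · intro k hk hd
      have h1 := key1 hp0 hp1 hn1 hk hd
      calc t2 * X = ((3 + p)/4 * ((n:ℝ) + 1)) ^ α := by
            rw [Real.mul_rpow (by linarith) (by linarith), ht2def, hX]
        _ ≤ ((k:ℝ)+1) ^ α := Real.rpow_le_rpow_of_nonpos (by positivity) h1 hα.le
    · intro k _
      exact (Real.rpow_pos_of_pos (by positivity) _).le
  have hr2 : (0:ℝ) < p/2 * n := by positivity
  have hS2 : (t2' * X) * (1 - n * p * (1 - p) / (p/2 * n)^2)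
      ≤ ∑ k ∈ Finset.range (n+1), bw p n k * ((((n-k:ℕ):ℝ)+1) ^ α) := by
    apply E_split_ge hp0.le hp1.le n _ _ _ hr2
    · positivity
    · intro k hk hd
      have h1 := key2 hp0 hp1 hn1 hk hd
      calc t2' * X = ((4 - p)/4 * ((n:ℝ) + 1)) ^ α := by
            rw [Real.mul_rpow (by linarith) (by linarith), ht2'def, hX]
        _ ≤ (((n-k:ℕ):ℝ)+1) ^ α := Real.rpow_le_rpow_of_nonpos (by positivity) h1 hα.le
    · intro k _
      exact (Real.rpow_pos_of_pos (by positivity) _).le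
  -- combine
  have hu : p * (t2 * (n * p * (1 - p) / (q/2 * n)^2))
      + q * (t2' * (n * p * (1 - p) / (p/2 * n)^2)) = C₃ / n := by
    rw [hC₃]
    field_simp
    ring
  have hcomb : (ρ - C₃/n) * X
      ≤ p * (∑ k ∈ Finset.range (n+1), bw p n k * (((k:ℝ)+1) ^ α))
        + q * (∑ k ∈ Finset.range (n+1), bw p n k * ((((n-k:ℕ):ℝ)+1) ^ α)) := by
    have e1 := mul_le_mul_of_nonneg_left hS1 hp0.le
    have e2 := mul_le_mul_of_nonneg_left hS2 hq0.le
    have : p * ((t2 * X) * (1 - n * p * (1 - p) / (q/2 * n)^2))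
        + q * ((t2' * X) * (1 - n * p * (1 - p) / (p/2 * n)^2))
        = (ρ - C₃/n) * X := by
      rw [hρdef, ← hu]; ring
    linarith
  have hfinal : X + c * (n:ℝ) ^ α ≤ (ρ - C₃/n) * X := by
    have h1 : (1 + (ρ-1)/2) * X ≤ (ρ - C₃/n) * X := by
      apply mul_le_mul_of_nonneg_right _ hX0.le
      linarith
    have h2 : c * (n:ℝ) ^ α ≤ (ρ-1)/2 * X := by
      rw [hcdef]
      calc (ρ - 1)/2 * (2:ℝ) ^ α * (n:ℝ) ^ α
          = (ρ-1)/2 * ((2:ℝ) ^ α * (n:ℝ) ^ α) := by ring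
        _ ≤ (ρ-1)/2 * X := mul_le_mul_of_nonneg_left hnX (by linarith)
    linarith
  have hpq : p + q = 1 := by rw [hq]; ring
  have expand : p * (2 - ∑ k ∈ Finset.range (n+1), bw p n k * (((k:ℝ)+1) ^ α))
      + q * (2 - ∑ k ∈ Finset.range (n+1), bw p n k * ((((n-k:ℕ):ℝ)+1) ^ α))
      = 2 * (p + q) - (p * (∑ k ∈ Finset.range (n+1), bw p n k * (((k:ℝ)+1) ^ α))
        + q * (∑ k ∈ Finset.range (n+1), bw p n k * ((((n-k:ℕ):ℝ)+1) ^ α))) := by ring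
  rw [expand, hpq]
  have h9 := hfinal.trans hcomb
  linarith [h9]
set_option maxHeartbeats 1000000 in
lemma contr_log (p : ℝ) (hp : p ∈ Set.Ioo (0:ℝ) 1) :
    ∃ c > 0, ∀ᶠ n : ℕ in atTop,
      p * (∑ k ∈ Finset.range (n+1), bw p n k * (1 + Real.log ((k:ℝ)+1)))
      + (1-p) * (∑ k ∈ Finset.range (n+1), bw p n k * (1 + Real.log (((n-k : ℕ):ℝ)+1)))
      ≤ (1 + Real.log ((n:ℝ)+1)) - c * (n:ℝ) ^ (0:ℝ) := by
  obtain ⟨hp0, hp1⟩ := hp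
  set q : ℝ := 1 - p with hq
  have hq0 : 0 < q := by simp only [hq]; linarith
  set L2 : ℝ := Real.log ((3 + p)/4) with hL2def
  set L2' : ℝ := Real.log ((4 - p)/4) with hL2'def
  have h21 : L2 < 0 := Real.log_neg (by linarith) (by linarith)
  have h21' : L2' < 0 := Real.log_neg (by linarith) (by linarith)
  set d : ℝ := -(p * L2 + q * L2') with hddef
  have hd0 : 0 < d := by
    have h1 : p * L2 < 0 := mul_neg_of_pos_of_neg hp0 h21
    have h2 : q * L2' < 0 := mul_neg_of_pos_of_neg hq0 h21'
    rw [hddef]; linarith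
  set C₂ : ℝ := 4 * p^2 / q + 4 * q^2 / p with hC₂
  have hC₂0 : 0 < C₂ := by positivity
  clear_value L2 L2' d C₂
  refine ⟨d/2, by linarith, ?_⟩
  -- eventual smallness of (C₂ / n) * (log (n+1)) : use log = o(id)
  have hlo : ∀ᶠ n : ℕ in atTop, ‖Real.log ((n:ℝ)+1)‖ ≤ d / (8 * C₂) * ‖(n:ℝ)+1‖ := by
    have h1 : Tendsto (fun n : ℕ => (n:ℝ)+1) atTop atTop :=
      tendsto_atTop_add_const_right _ 1 tendsto_natCast_atTop_atTop
    have h2 := Real.isLittleO_log_id_atTop.comp_tendsto h1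
    exact h2.def (by positivity)
  filter_upwards [eventually_ge_atTop 1, hlo,
    eventually_ge_atTop (⌈8 * C₂ / d⌉₊ + 1)] with n hn1 hlon hn2
  have hnR : (1:ℝ) ≤ n := by exact_mod_cast hn1
  have hnpos : (0:ℝ) < n := by linarith
  have hlog0 : 0 ≤ Real.log ((n:ℝ)+1) := Real.log_nonneg (by linarith)
  -- tail * log bound : (C₂/n) * log(n+1) ≤ d/2
  have hCn : C₂ / n * Real.log ((n:ℝ)+1) ≤ d/2 := by
    have h3 : Real.log ((n:ℝ)+1) ≤ d / (8 * C₂) * ((n:ℝ)+1) := by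
      have := hlon
      rw [Real.norm_eq_abs, Real.norm_eq_abs] at this
      calc Real.log ((n:ℝ)+1) ≤ |Real.log ((n:ℝ)+1)| := le_abs_self _
        _ ≤ d / (8 * C₂) * |(n:ℝ)+1| := this
        _ = d / (8 * C₂) * ((n:ℝ)+1) := by rw [abs_of_pos (by linarith)]
    have h4 : C₂ / n * Real.log ((n:ℝ)+1) ≤ C₂ / n * (d / (8 * C₂) * ((n:ℝ)+1)) := by
      apply mul_le_mul_of_nonneg_left h3 (by positivity)
    have h5 : C₂ / n * (d / (8 * C₂) * ((n:ℝ)+1)) = d/8 * (((n:ℝ)+1)/n) := by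
      field_simp
    have h6 : ((n:ℝ)+1)/n ≤ 2 := by
      rw [div_le_iff₀ hnpos]; linarith
    have h7 : d/8 * (((n:ℝ)+1)/n) ≤ d/8 * 2 := by
      apply mul_le_mul_of_nonneg_left h6 (by linarith)
    linarith
  set B : ℝ := Real.log ((n:ℝ)+1) with hB
  -- first expectation
  have hr1 : (0:ℝ) < q/2 * n := by positivity
  have hS1 : ∑ k ∈ Finset.range (n+1), bw p n k * (Real.log ((k:ℝ)+1))
      ≤ (L2 + B) + (n * p * (1 - p) / (q/2 * n)^2) * B := by
    have hA0 : 0 ≤ L2 + B := by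
      have : Real.log ((3+p)/4 * ((n:ℝ)+1)) = L2 + B := by
        rw [hL2def, hB, Real.log_mul (by linarith) (by linarith)]
      rw [← this]
      apply Real.log_nonneg
      nlinarith
    apply E_split_le hp0.le hp1.le n _ _ _ _ hr1 hA0
    · have : B = 0 + B := by ring
      rw [this] at *
      linarith [h21]
    · intro k hk hd2
      have h1 := key1 hp0 hp1 hn1 hk hd2
      calc Real.log ((k:ℝ)+1) ≤ Real.log ((3 + p)/4 * ((n:ℝ) + 1)) :=
            Real.log_le_log (by positivity) h1
        _ = L2 + B := by rw [hL2def, hB, Real.log_mul (by linarith) (by linarith)]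
    · intro k hk
      apply Real.log_le_log (by positivity)
      have : (k:ℝ) ≤ n := by exact_mod_cast hk
      linarith
  -- second expectation
  have hr2 : (0:ℝ) < p/2 * n := by positivity
  have hS2 : ∑ k ∈ Finset.range (n+1), bw p n k * (Real.log (((n-k:ℕ):ℝ)+1))
      ≤ (L2' + B) + (n * p * (1 - p) / (p/2 * n)^2) * B := by
    have hA0 : 0 ≤ L2' + B := by
      have : Real.log ((4-p)/4 * ((n:ℝ)+1)) = L2' + B := by
        rw [hL2'def, hB, Real.log_mul (by linarith) (by linarith)]
      rw [← this]
      apply Real.log_nonneg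
      nlinarith
    apply E_split_le hp0.le hp1.le n _ _ _ _ hr2 hA0
    · have : B = 0 + B := by ring
      rw [this] at *
      linarith [h21']
    · intro k hk hd2
      have h1 := key2 hp0 hp1 hn1 hk hd2
      calc Real.log (((n-k:ℕ):ℝ)+1) ≤ Real.log ((4 - p)/4 * ((n:ℝ) + 1)) :=
            Real.log_le_log (by positivity) h1
        _ = L2' + B := by rw [hL2'def, hB, Real.log_mul (by linarith) (by linarith)]
    · intro k hk
      apply Real.log_le_log (by positivity)
      have : ((n - k : ℕ):ℝ) ≤ n := by exact_mod_cast Nat.sub_le n k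
      linarith
  -- rewrite the sums with the `1 +` shift
  have rw1 : ∑ k ∈ Finset.range (n+1), bw p n k * (1 + Real.log ((k:ℝ)+1))
      = 1 + ∑ k ∈ Finset.range (n+1), bw p n k * (Real.log ((k:ℝ)+1)) := by
    have : ∀ k ∈ Finset.range (n+1), bw p n k * (1 + Real.log ((k:ℝ)+1))
        = bw p n k + bw p n k * (Real.log ((k:ℝ)+1)) := fun k _ => by ring
    rw [Finset.sum_congr rfl this, Finset.sum_add_distrib, bw_sum]
  have rw2 : ∑ k ∈ Finset.range (n+1), bw p n k * (1 + Real.log (((n-k:ℕ):ℝ)+1))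
      = 1 + ∑ k ∈ Finset.range (n+1), bw p n k * (Real.log (((n-k:ℕ):ℝ)+1)) := by
    have : ∀ k ∈ Finset.range (n+1), bw p n k * (1 + Real.log (((n-k:ℕ):ℝ)+1))
        = bw p n k + bw p n k * (Real.log (((n-k:ℕ):ℝ)+1)) := fun k _ => by ring
    rw [Finset.sum_congr rfl this, Finset.sum_add_distrib, bw_sum]
  rw [rw1, rw2, Real.rpow_zero]
  -- tail identity
  have hu : p * (n * p * (1 - p) / (q/2 * n)^2) + q * (n * p * (1 - p) / (p/2 * n)^2)
      = C₂ / n := by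
    rw [hC₂]
    field_simp
    ring
  have hpq : p + q = 1 := by rw [hq]; ring
  clear_value q B
  -- combine
  have e1 := mul_le_mul_of_nonneg_left hS1 hp0.le
  have e2 := mul_le_mul_of_nonneg_left hS2 hq0.le
  have hcomb : p * (∑ k ∈ Finset.range (n+1), bw p n k * (Real.log ((k:ℝ)+1)))
      + q * (∑ k ∈ Finset.range (n+1), bw p n k * (Real.log (((n-k:ℕ):ℝ)+1)))
      ≤ (p + q) * B - d + (C₂/n) * B := by
    have hiden : p * ((L2 + B) + (n * p * (1 - p) / (q/2 * n)^2) * B)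
        + q * ((L2' + B) + (n * p * (1 - p) / (p/2 * n)^2) * B)
        = (p + q) * B + (p * L2 + q * L2') + (p * (n * p * (1 - p) / (q/2 * n)^2)
          + q * (n * p * (1 - p) / (p/2 * n)^2)) * B := by ring
    have h10 : (p * ((n:ℝ) * p * (1 - p) / (q/2 * n)^2)
        + q * ((n:ℝ) * p * (1 - p) / (p/2 * n)^2)) * B = (C₂/n) * B := by rw [hu]
    have h11 : p * L2 + q * L2' = -d := by rw [hddef]; ring
    linarith [e1, e2, hiden, h10, h11]
  have final : p * (1 + ∑ k ∈ Finset.range (n+1), bw p n k * (Real.log ((k:ℝ)+1)))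
      + q * (1 + ∑ k ∈ Finset.range (n+1), bw p n k * (Real.log (((n-k:ℕ):ℝ)+1)))
      = (p + q) + (p * (∑ k ∈ Finset.range (n+1), bw p n k * (Real.log ((k:ℝ)+1)))
        + q * (∑ k ∈ Finset.range (n+1), bw p n k * (Real.log (((n-k:ℕ):ℝ)+1)))) := by
    ring
  rw [final, hpq]
  have hCnB : (C₂/n) * B ≤ d/2 := hCn
  rw [hpq] at hcomb
  linarith [hcomb, hCnB]
lemma binomExp_eq (p : ℝ) (n : ℕ) (f : ℕ → ℝ) :
    binomExp p n f = ∑ k ∈ Finset.range (n+1), bw p n k * f k := rfl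

lemma bw_self (p : ℝ) (n : ℕ) : bw p n n = p ^ n := by
  unfold bw; simp

lemma bw_zero (p : ℝ) (n : ℕ) : bw p n 0 = (1 - p) ^ n := by
  unfold bw; simp

set_option maxHeartbeats 1000000 in
lemma master (p : Fin 2 → Fin 2 → ℝ) (hp : ∀ i j, p i j ∈ Set.Ioo (0:ℝ) 1)
    (hsum : ∀ i, p i 0 + p i 1 = 1)
    (a ε : Fin 2 → ℕ → ℝ) (α : ℝ)
    (hrec : ∀ i : Fin 2, ∀ n : ℕ, 1 ≤ n →
      a i n = p i 0 * binomExp (p i 0) n (a 0)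
        + p i 1 * binomExp (p i 0) n (fun k => a 1 (n - k)) + ε i n)
    (h : ℕ → ℝ) (hh : ∀ n, 1 ≤ h n)
    (K : ℝ) (hK : 0 ≤ K) (hKε : ∀ᶠ n : ℕ in atTop, ∀ i, |ε i n| ≤ K * (n:ℝ) ^ α)
    (c : ℝ) (hc : 0 < c)
    (s : ℝ) (hs0 : 0 ≤ s) (hs1 : s < 1) (hsp : ∀ i j, p i j ≤ s)
    (hcontr : ∀ᶠ n : ℕ in atTop, ∀ i,
      p i 0 * (∑ k ∈ Finset.range (n+1), bw (p i 0) n k * h k)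
      + p i 1 * (∑ k ∈ Finset.range (n+1), bw (p i 0) n k * h (n - k))
      ≤ h n - c * (n:ℝ) ^ α)
    (hsmall : ∀ᶠ n : ℕ in atTop, 4 * s^(n+1) * h n ≤ c * (n:ℝ) ^ α) :
    ∃ C : ℝ, 0 ≤ C ∧ ∀ n : ℕ, ∀ i : Fin 2, |a i n| ≤ C * h n := by
  have hs4ev : ∀ᶠ n : ℕ in atTop, s^(n+1) ≤ 1/4 := by
    have ht := tendsto_pow_atTop_nhds_zero_of_lt_one hs0 hs1
    filter_upwards [ht.eventually_lt_const (by norm_num : (0:ℝ) < 1/4)] with n hn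
    have : s^(n+1) ≤ s^n := pow_le_pow_of_le_one hs0 hs1.le (by omega)
    linarith
  obtain ⟨N, hN⟩ := Filter.eventually_atTop.1
    (((hKε.and hcontr).and (hsmall.and hs4ev)).and (eventually_ge_atTop 1))
  set C : ℝ := 2*K/c + ∑ k ∈ Finset.range N, (|a 0 k| + |a 1 k|) with hCdef
  have hsum0 : 0 ≤ ∑ k ∈ Finset.range N, (|a 0 k| + |a 1 k|) :=
    Finset.sum_nonneg fun k _ => by positivity
  have hC0 : 0 ≤ C := by rw [hCdef]; positivity
  have hCK : 2*K/c ≤ C := by rw [hCdef]; linarith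
  clear_value C
  refine ⟨C, hC0, ?_⟩
  intro n
  induction n using Nat.strong_induction_on with
  | _ n IH =>
  by_cases hnN : n < N
  · intro i
    have h1 : |a i n| ≤ ∑ k ∈ Finset.range N, (|a 0 k| + |a 1 k|) := by
      have hmem : n ∈ Finset.range N := Finset.mem_range.2 hnN
      have h2 : |a 0 n| + |a 1 n| ≤ ∑ k ∈ Finset.range N, (|a 0 k| + |a 1 k|) :=
        Finset.single_le_sum (f := fun k => |a 0 k| + |a 1 k|)
          (fun k _ => by positivity) hmem
      fin_cases i
      · show |a 0 n| ≤ ∑ k ∈ Finset.range N, (|a 0 k| + |a 1 k|)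
        linarith [abs_nonneg (a 1 n)]
      · show |a 1 n| ≤ ∑ k ∈ Finset.range N, (|a 0 k| + |a 1 k|)
        linarith [abs_nonneg (a 0 n)]
    have h2 : C * 1 ≤ C * h n := mul_le_mul_of_nonneg_left (hh n) hC0
    have h3 : 0 ≤ 2*K/c := by positivity
    have h4 : ∑ k ∈ Finset.range N, (|a 0 k| + |a 1 k|) ≤ C := by rw [hCdef]; linarith
    linarith [h1, h2, h4]
  · push_neg at hnN
    obtain ⟨⟨⟨hε', hcon⟩, hsm, hs4⟩, hn1⟩ := hN n hnN
    have hα0 : (0:ℝ) ≤ (n:ℝ) ^ α := Real.rpow_nonneg (Nat.cast_nonneg n) α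
    have hM0 : 0 ≤ max |a 0 n| |a 1 n| := le_trans (abs_nonneg _) (le_max_left _ _)
    have keyi : ∀ i : Fin 2, |a i n| ≤ C * h n - (C*c - K) * (n:ℝ)^α
        + 2 * s^(n+1) * max |a 0 n| |a 1 n| := by
      intro i
      have hP := hp i 0
      obtain ⟨hP0, hP1⟩ := hP
      have hQ := hp i 1
      obtain ⟨hQ0, hQ1⟩ := hQ
      have hQP : 1 - p i 0 = p i 1 := by linarith [hsum i]
      have heq := hrec i n hn1
      rw [binomExp_eq, binomExp_eq] at heq
      rw [Finset.sum_range_succ (fun k => bw (p i 0) n k * a 0 k) n] at heq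
      rw [Finset.sum_range_succ' (fun k => bw (p i 0) n k * a 1 (n - k)) n] at heq
      beta_reduce at heq
      simp only [Nat.sub_zero] at heq
      -- bounds on the truncated sums
      have hb1 : |∑ k ∈ Finset.range n, bw (p i 0) n k * a 0 k|
          ≤ C * ∑ k ∈ Finset.range (n+1), bw (p i 0) n k * h k := by
        calc |∑ k ∈ Finset.range n, bw (p i 0) n k * a 0 k|
            ≤ ∑ k ∈ Finset.range n, |bw (p i 0) n k * a 0 k| :=
              Finset.abs_sum_le_sum_abs _ _
          _ ≤ ∑ k ∈ Finset.range n, bw (p i 0) n k * (C * h k) := by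
              apply Finset.sum_le_sum
              intro k hk
              rw [abs_mul, abs_of_nonneg (bw_nonneg hP0.le hP1.le n k)]
              exact mul_le_mul_of_nonneg_left
                (IH k (Finset.mem_range.1 hk) 0) (bw_nonneg hP0.le hP1.le n k)
          _ ≤ ∑ k ∈ Finset.range (n+1), bw (p i 0) n k * (C * h k) := by
              apply Finset.sum_le_sum_of_subset_of_nonneg
                (Finset.range_subset_range.2 (by omega))
              intro k _ _
              exact mul_nonneg (bw_nonneg hP0.le hP1.le n k)
                (mul_nonneg hC0 (by linarith [hh k]))
          _ = C * ∑ k ∈ Finset.range (n+1), bw (p i 0) n k * h k := by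
              rw [Finset.mul_sum]
              exact Finset.sum_congr rfl fun k _ => by ring
      have hb2 : |∑ k ∈ Finset.range n, bw (p i 0) n (k+1) * a 1 (n - (k+1))|
          ≤ C * ∑ k ∈ Finset.range (n+1), bw (p i 0) n k * h (n - k) := by
        calc |∑ k ∈ Finset.range n, bw (p i 0) n (k+1) * a 1 (n - (k+1))|
            ≤ ∑ k ∈ Finset.range n, |bw (p i 0) n (k+1) * a 1 (n - (k+1))| :=
              Finset.abs_sum_le_sum_abs _ _
          _ ≤ ∑ k ∈ Finset.range n, bw (p i 0) n (k+1) * (C * h (n - (k+1))) := by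
              apply Finset.sum_le_sum
              intro k hk
              rw [abs_mul, abs_of_nonneg (bw_nonneg hP0.le hP1.le n (k+1))]
              have hlt : n - (k+1) < n := by
                have := Finset.mem_range.1 hk; omega
              exact mul_le_mul_of_nonneg_left
                (IH (n - (k+1)) hlt 1) (bw_nonneg hP0.le hP1.le n (k+1))
          _ ≤ ∑ k ∈ Finset.range (n+1), bw (p i 0) n k * (C * h (n - k)) := by
              rw [Finset.sum_range_succ'
                (fun k => bw (p i 0) n k * (C * h (n - k))) n]
              have h9 : (0:ℝ) ≤ bw (p i 0) n 0 * (C * h (n - 0)) :=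
                mul_nonneg (bw_nonneg hP0.le hP1.le n 0)
                  (mul_nonneg hC0 (by linarith [hh (n - 0)]))
              linarith [h9]
          _ = C * ∑ k ∈ Finset.range (n+1), bw (p i 0) n k * h (n - k) := by
              rw [Finset.mul_sum]
              exact Finset.sum_congr rfl fun k _ => by ring
      -- self terms
      have hself1 : p i 0 * (bw (p i 0) n n * |a 0 n|) ≤ s^(n+1) * max |a 0 n| |a 1 n| := by
        rw [bw_self]
        calc p i 0 * ((p i 0) ^ n * |a 0 n|) = (p i 0)^(n+1) * |a 0 n| := by ring
          _ ≤ s^(n+1) * max |a 0 n| |a 1 n| :=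
            mul_le_mul (pow_le_pow_left₀ hP0.le (hsp i 0) _)
              (le_max_left _ _) (abs_nonneg _) (pow_nonneg hs0 _)
      have hself2 : p i 1 * (bw (p i 0) n 0 * |a 1 n|) ≤ s^(n+1) * max |a 0 n| |a 1 n| := by
        rw [bw_zero, hQP]
        calc p i 1 * ((p i 1) ^ n * |a 1 n|) = (p i 1)^(n+1) * |a 1 n| := by ring
          _ ≤ s^(n+1) * max |a 0 n| |a 1 n| :=
            mul_le_mul (pow_le_pow_left₀ hQ0.le (hsp i 1) _)
              (le_max_right _ _) (abs_nonneg _) (pow_nonneg hs0 _)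
      -- triangle inequality
      have habs : |a i n| ≤ p i 0 * (|∑ k ∈ Finset.range n, bw (p i 0) n k * a 0 k|
            + bw (p i 0) n n * |a 0 n|)
          + p i 1 * (|∑ k ∈ Finset.range n, bw (p i 0) n (k+1) * a 1 (n - (k+1))|
            + bw (p i 0) n 0 * |a 1 n|) + |ε i n| := by
        rw [heq]
        have t0 : ∀ x y z : ℝ, |x + y + z| ≤ |x| + |y| + |z| := fun x y z =>
          (abs_add_le _ _).trans (by linarith [abs_add_le x y])
        have t1 := t0 (p i 0 * (∑ k ∈ Finset.range n, bw (p i 0) n k * a 0 k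
            + bw (p i 0) n n * a 0 n))
          (p i 1 * (∑ k ∈ Finset.range n, bw (p i 0) n (k+1) * a 1 (n - (k+1))
            + bw (p i 0) n 0 * a 1 n)) (ε i n)
        have t2 : |p i 0 * (∑ k ∈ Finset.range n, bw (p i 0) n k * a 0 k
            + bw (p i 0) n n * a 0 n)|
            ≤ p i 0 * (|∑ k ∈ Finset.range n, bw (p i 0) n k * a 0 k|
              + bw (p i 0) n n * |a 0 n|) := by
          rw [abs_mul, abs_of_pos hP0]
          apply mul_le_mul_of_nonneg_left _ hP0.le
          calc |∑ k ∈ Finset.range n, bw (p i 0) n k * a 0 k + bw (p i 0) n n * a 0 n|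
              ≤ |∑ k ∈ Finset.range n, bw (p i 0) n k * a 0 k|
                + |bw (p i 0) n n * a 0 n| := abs_add_le _ _
            _ = _ := by
                rw [abs_mul, abs_of_nonneg (bw_nonneg hP0.le hP1.le n n)]
        have t3 : |p i 1 * (∑ k ∈ Finset.range n, bw (p i 0) n (k+1) * a 1 (n - (k+1))
            + bw (p i 0) n 0 * a 1 n)|
            ≤ p i 1 * (|∑ k ∈ Finset.range n, bw (p i 0) n (k+1) * a 1 (n - (k+1))|
              + bw (p i 0) n 0 * |a 1 n|) := by
          rw [abs_mul, abs_of_pos hQ0]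
          apply mul_le_mul_of_nonneg_left _ hQ0.le
          calc |∑ k ∈ Finset.range n, bw (p i 0) n (k+1) * a 1 (n - (k+1))
              + bw (p i 0) n 0 * a 1 n|
              ≤ |∑ k ∈ Finset.range n, bw (p i 0) n (k+1) * a 1 (n - (k+1))|
                + |bw (p i 0) n 0 * a 1 n| := abs_add_le _ _
            _ = _ := by
                rw [abs_mul, abs_of_nonneg (bw_nonneg hP0.le hP1.le n 0)]
        linarith
      -- put it together
      have m1 : p i 0 * |∑ k ∈ Finset.range n, bw (p i 0) n k * a 0 k|
          ≤ p i 0 * (C * ∑ k ∈ Finset.range (n+1), bw (p i 0) n k * h k) :=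
        mul_le_mul_of_nonneg_left hb1 hP0.le
      have m2 : p i 1 * |∑ k ∈ Finset.range n, bw (p i 0) n (k+1) * a 1 (n - (k+1))|
          ≤ p i 1 * (C * ∑ k ∈ Finset.range (n+1), bw (p i 0) n k * h (n - k)) :=
        mul_le_mul_of_nonneg_left hb2 hQ0.le
      have m3 : C * (p i 0 * (∑ k ∈ Finset.range (n+1), bw (p i 0) n k * h k)
          + p i 1 * (∑ k ∈ Finset.range (n+1), bw (p i 0) n k * h (n - k)))
          ≤ C * (h n - c * (n:ℝ)^α) :=
        mul_le_mul_of_nonneg_left (hcon i) hC0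
      have m4 := hε' i
      linarith [habs, m1, m2, m3, m4, hself1, hself2]
    -- resolve the self-reference
    have hMle : max |a 0 n| |a 1 n| ≤ C * h n - (C*c - K) * (n:ℝ)^α
        + 2 * s^(n+1) * max |a 0 n| |a 1 n| := max_le (keyi 0) (keyi 1)
    have e1 : 2*s^(n+1)*(C*h n) ≤ (C/2)*(c*(n:ℝ)^α) := by
      have := mul_le_mul_of_nonneg_left hsm (by positivity : (0:ℝ) ≤ C/2)
      nlinarith [this]
    have e2 : K ≤ C*c/2 := by
      rw [div_le_iff₀ hc] at hCK
      linarith [hCK]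
    have e3 : K * (n:ℝ)^α ≤ (C*c/2) * (n:ℝ)^α := mul_le_mul_of_nonneg_right e2 hα0
    have hfac : (0:ℝ) < 1 - 2*s^(n+1) := by nlinarith [hs4]
    have hMC : max |a 0 n| |a 1 n| ≤ C * h n := by nlinarith [hMle, e1, e3, hfac, hM0]
    intro i
    have : |a i n| ≤ max |a 0 n| |a 1 n| := by
      fin_cases i
      · show |a 0 n| ≤ max |a 0 n| |a 1 n|
        exact le_max_left _ _
      · show |a 1 n| ≤ max |a 0 n| |a 1 n|
        exact le_max_right _ _
    linarith
set_option maxHeartbeats 1000000 in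
theorem stmt2 (p : Fin 2 → Fin 2 → ℝ)
    (hp : ∀ i j, p i j ∈ Set.Ioo (0 : ℝ) 1)
    (hsum : ∀ i, p i 0 + p i 1 = 1)
    (a ε : Fin 2 → ℕ → ℝ) (α : ℝ)
    (hrec : ∀ i : Fin 2, ∀ n : ℕ, 1 ≤ n →
      a i n = p i 0 * binomExp (p i 0) n (a 0)
        + p i 1 * binomExp (p i 0) n (fun k => a 1 (n - k)) + ε i n)
    (hε : ∀ i : Fin 2, (fun n : ℕ => ε i n) =O[atTop] (fun n : ℕ => (n : ℝ) ^ α)) :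
    (α < 0 → ∀ i : Fin 2, (fun n : ℕ => a i n) =O[atTop] (fun _ : ℕ => (1 : ℝ))) ∧
    (α > 0 → ∀ i : Fin 2, (fun n : ℕ => a i n) =O[atTop] (fun n : ℕ => (n : ℝ) ^ α)) ∧
    (α = 0 → ∀ i : Fin 2, (fun n : ℕ => a i n) =O[atTop] (fun n : ℕ => Real.log n)) := by
  have h01 : ∀ i : Fin 2, p i 1 = 1 - p i 0 := fun i => by linarith [hsum i]
  set s : ℝ := max (max (p 0 0) (p 0 1)) (max (p 1 0) (p 1 1)) with hsdef
  have hs0 : 0 ≤ s :=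
    le_trans (hp 0 0).1.le (le_trans (le_max_left _ _) (le_max_left _ _))
  have hs1 : s < 1 := by
    rw [hsdef]
    exact max_lt (max_lt (hp 0 0).2 (hp 0 1).2) (max_lt (hp 1 0).2 (hp 1 1).2)
  have hsp : ∀ i j : Fin 2, p i j ≤ s := by
    intro i j
    rw [hsdef]
    fin_cases i <;> fin_cases j
    · exact (le_max_left _ _).trans (le_max_left _ _)
    · exact (le_max_right _ _).trans (le_max_left _ _)
    · exact (le_max_left _ _).trans (le_max_right _ _)
    · exact (le_max_right _ _).trans (le_max_right _ _)
  clear_value s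
  obtain ⟨K0, hK0⟩ := (hε 0).bound
  obtain ⟨K1, hK1⟩ := (hε 1).bound
  set K : ℝ := |K0| + |K1| with hKdef
  have hK : 0 ≤ K := by rw [hKdef]; positivity
  have hKK0 : K0 ≤ K := by rw [hKdef]; linarith [le_abs_self K0, abs_nonneg K1]
  have hKK1 : K1 ≤ K := by rw [hKdef]; linarith [le_abs_self K1, abs_nonneg K0]
  clear_value K
  have hKε : ∀ᶠ n : ℕ in atTop, ∀ i : Fin 2, |ε i n| ≤ K * (n:ℝ)^α := by
    filter_upwards [hK0, hK1] with n h0 h1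
    have hXa : 0 ≤ (n:ℝ)^α := Real.rpow_nonneg (Nat.cast_nonneg n) α
    have hnn : ‖((n:ℝ))^α‖ = (n:ℝ)^α := by rw [Real.norm_eq_abs, abs_of_nonneg hXa]
    rw [Real.norm_eq_abs, hnn] at h0 h1
    intro i
    fin_cases i
    · show |ε 0 n| ≤ K * (n:ℝ)^α
      calc |ε 0 n| ≤ K0 * (n:ℝ)^α := h0
        _ ≤ K * (n:ℝ)^α := mul_le_mul_of_nonneg_right hKK0 hXa
    · show |ε 1 n| ≤ K * (n:ℝ)^α
      calc |ε 1 n| ≤ K1 * (n:ℝ)^α := h1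
        _ ≤ K * (n:ℝ)^α := mul_le_mul_of_nonneg_right hKK1 hXa
  refine ⟨?_, ?_, ?_⟩
  -- ================= case α < 0 =================
  · intro hα
    obtain ⟨c0, hc00, hev0⟩ := contr_neg (p 0 0) α (hp 0 0) hα
    obtain ⟨c1, hc10, hev1⟩ := contr_neg (p 1 0) α (hp 1 0) hα
    have hc : 0 < min c0 c1 := lt_min hc00 hc10
    have hcontr : ∀ᶠ n : ℕ in atTop, ∀ i : Fin 2,
        p i 0 * (∑ k ∈ Finset.range (n+1), bw (p i 0) n k * (2 - ((k:ℝ)+1) ^ α))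
        + p i 1 * (∑ k ∈ Finset.range (n+1), bw (p i 0) n k * (2 - (((n-k : ℕ):ℝ)+1) ^ α))
        ≤ (2 - ((n:ℝ)+1) ^ α) - min c0 c1 * (n:ℝ) ^ α := by
      filter_upwards [hev0, hev1] with n e0 e1
      have hα0 : 0 ≤ (n:ℝ)^α := Real.rpow_nonneg (Nat.cast_nonneg n) α
      intro i
      fin_cases i
      · show p 0 0 * (∑ k ∈ Finset.range (n+1), bw (p 0 0) n k * (2 - ((k:ℝ)+1) ^ α))
            + p 0 1 * (∑ k ∈ Finset.range (n+1), bw (p 0 0) n k * (2 - (((n-k : ℕ):ℝ)+1) ^ α))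
            ≤ (2 - ((n:ℝ)+1) ^ α) - min c0 c1 * (n:ℝ) ^ α
        rw [h01 0]
        have h5 : min c0 c1 * (n:ℝ)^α ≤ c0 * (n:ℝ)^α :=
          mul_le_mul_of_nonneg_right (min_le_left _ _) hα0
        linarith [e0]
      · show p 1 0 * (∑ k ∈ Finset.range (n+1), bw (p 1 0) n k * (2 - ((k:ℝ)+1) ^ α))
            + p 1 1 * (∑ k ∈ Finset.range (n+1), bw (p 1 0) n k * (2 - (((n-k : ℕ):ℝ)+1) ^ α))
            ≤ (2 - ((n:ℝ)+1) ^ α) - min c0 c1 * (n:ℝ) ^ α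
        rw [h01 1]
        have h5 : min c0 c1 * (n:ℝ)^α ≤ c1 * (n:ℝ)^α :=
          mul_le_mul_of_nonneg_right (min_le_right _ _) hα0
        linarith [e1]
    have hsmall : ∀ᶠ n : ℕ in atTop,
        4 * s^(n+1) * (2 - ((n:ℝ)+1) ^ α) ≤ min c0 c1 * (n:ℝ) ^ α := by
      set m : ℕ := ⌈-α⌉₊ with hm
      have hmα : -α ≤ (m:ℝ) := Nat.le_ceil _
      have hev := (tendsto_pow_const_mul_const_pow_of_lt_one m hs0 hs1).eventually_lt_const
        (show (0:ℝ) < min c0 c1 / 8 by positivity)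
      filter_upwards [hev, eventually_ge_atTop 1] with n hlt hn1
      have hnR : (1:ℝ) ≤ n := by exact_mod_cast hn1
      have hX0 : 0 ≤ ((n:ℝ)+1)^α := Real.rpow_nonneg (by linarith) _
      have h1 : 2 - ((n:ℝ)+1)^α ≤ 2 := by linarith
      have h1' : 0 ≤ 2 - ((n:ℝ)+1)^α := by
        have : ((n:ℝ)+1)^α ≤ 1 :=
          Real.rpow_le_one_of_one_le_of_nonpos (by linarith) hα.le
        linarith
      have h2 : s^(n+1) ≤ s^n := pow_le_pow_of_le_one hs0 hs1.le (by omega)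
      have h5 : (0:ℝ) < (n:ℝ)^m := by positivity
      have h3 : ((n:ℝ)^m)⁻¹ ≤ (n:ℝ)^α := by
        have := Real.rpow_le_rpow_of_exponent_le hnR (show -(m:ℝ) ≤ α by linarith)
        rwa [Real.rpow_neg (by positivity), Real.rpow_natCast] at this
      have h6 : 4 * s^(n+1) * (2 - ((n:ℝ)+1)^α) ≤ 8 * s^n := by
        have ha := mul_le_mul_of_nonneg_left h1 (show (0:ℝ) ≤ 4*s^(n+1) by positivity)
        have hb : (0:ℝ) ≤ s^(n+1) := pow_nonneg hs0 _
        nlinarith [ha, h2]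
      have h7 : 8 * s^n ≤ min c0 c1 / (n:ℝ)^m := by
        rw [le_div_iff₀ h5]
        nlinarith [hlt, h5, pow_nonneg hs0 n]
      have h8 : min c0 c1 / (n:ℝ)^m ≤ min c0 c1 * (n:ℝ)^α := by
        rw [div_eq_mul_inv]
        exact mul_le_mul_of_nonneg_left h3 hc.le
      linarith
    obtain ⟨C, hC0, hC⟩ := master p hp hsum a ε α hrec
      (fun n => 2 - ((n:ℝ)+1) ^ α)
      (fun n => by
        have : ((n:ℝ)+1)^α ≤ 1 :=
          Real.rpow_le_one_of_one_le_of_nonpos (by linarith [show (0:ℝ) ≤ n from Nat.cast_nonneg n]) hα.le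
        linarith)
      K hK hKε (min c0 c1) hc s hs0 hs1 hsp hcontr hsmall
    intro i
    rw [isBigO_iff]
    refine ⟨2 * C, ?_⟩
    filter_upwards [] with n
    have hX0 : 0 ≤ ((n:ℝ)+1)^α := Real.rpow_nonneg (by positivity) _
    have h1 := hC n i
    have h2 : C * (2 - ((n:ℝ)+1)^α) ≤ 2 * C := by nlinarith [mul_nonneg hC0 hX0]
    rw [Real.norm_eq_abs, norm_one, mul_one]
    exact h1.trans h2
  -- ================= case α > 0 =================
  · intro hα
    obtain ⟨c0, hc00, hev0⟩ := contr_pos (p 0 0) α (hp 0 0) hα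
    obtain ⟨c1, hc10, hev1⟩ := contr_pos (p 1 0) α (hp 1 0) hα
    have hc : 0 < min c0 c1 := lt_min hc00 hc10
    have hcontr : ∀ᶠ n : ℕ in atTop, ∀ i : Fin 2,
        p i 0 * (∑ k ∈ Finset.range (n+1), bw (p i 0) n k * (((k:ℝ)+1) ^ α))
        + p i 1 * (∑ k ∈ Finset.range (n+1), bw (p i 0) n k * ((((n-k : ℕ):ℝ)+1) ^ α))
        ≤ (((n:ℝ)+1) ^ α) - min c0 c1 * (n:ℝ) ^ α := by
      filter_upwards [hev0, hev1] with n e0 e1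
      have hα0 : 0 ≤ (n:ℝ)^α := Real.rpow_nonneg (Nat.cast_nonneg n) α
      intro i
      fin_cases i
      · show p 0 0 * (∑ k ∈ Finset.range (n+1), bw (p 0 0) n k * (((k:ℝ)+1) ^ α))
            + p 0 1 * (∑ k ∈ Finset.range (n+1), bw (p 0 0) n k * ((((n-k : ℕ):ℝ)+1) ^ α))
            ≤ (((n:ℝ)+1) ^ α) - min c0 c1 * (n:ℝ) ^ α
        rw [h01 0]
        have h5 : min c0 c1 * (n:ℝ)^α ≤ c0 * (n:ℝ)^α :=
          mul_le_mul_of_nonneg_right (min_le_left _ _) hα0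
        linarith [e0]
      · show p 1 0 * (∑ k ∈ Finset.range (n+1), bw (p 1 0) n k * (((k:ℝ)+1) ^ α))
            + p 1 1 * (∑ k ∈ Finset.range (n+1), bw (p 1 0) n k * ((((n-k : ℕ):ℝ)+1) ^ α))
            ≤ (((n:ℝ)+1) ^ α) - min c0 c1 * (n:ℝ) ^ α
        rw [h01 1]
        have h5 : min c0 c1 * (n:ℝ)^α ≤ c1 * (n:ℝ)^α :=
          mul_le_mul_of_nonneg_right (min_le_right _ _) hα0
        linarith [e1]
    have hT0 : (0:ℝ) < (2:ℝ)^α := Real.rpow_pos_of_pos (by norm_num) _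
    have hsmall : ∀ᶠ n : ℕ in atTop,
        4 * s^(n+1) * (((n:ℝ)+1) ^ α) ≤ min c0 c1 * (n:ℝ) ^ α := by
      have hev := (tendsto_pow_atTop_nhds_zero_of_lt_one hs0 hs1).eventually_lt_const
        (show (0:ℝ) < min c0 c1 / (4 * (2:ℝ)^α) by positivity)
      filter_upwards [hev, eventually_ge_atTop 1] with n hlt hn1
      have hnR : (1:ℝ) ≤ n := by exact_mod_cast hn1
      have hα0 : 0 ≤ (n:ℝ)^α := Real.rpow_nonneg (by positivity) _
      have h9 : ((n:ℝ)+1)^α ≤ (2:ℝ)^α * (n:ℝ)^α := by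
        rw [← Real.mul_rpow (by norm_num) (by positivity)]
        exact Real.rpow_le_rpow (by linarith) (by linarith) hα.le
      have hsn : 0 ≤ s^(n+1) := pow_nonneg hs0 _
      have h10 : s^(n+1) ≤ s^n := pow_le_pow_of_le_one hs0 hs1.le (by omega)
      have h11 : 4 * s^(n+1) * (((n:ℝ)+1)^α)
          ≤ 4 * s^(n+1) * ((2:ℝ)^α * (n:ℝ)^α) :=
        mul_le_mul_of_nonneg_left h9 (by positivity)
      have h12 : 4 * s^(n+1) * ((2:ℝ)^α * (n:ℝ)^α)
          ≤ 4 * (min c0 c1 / (4 * (2:ℝ)^α)) * ((2:ℝ)^α * (n:ℝ)^α) := by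
        have : s^(n+1) ≤ min c0 c1 / (4 * (2:ℝ)^α) := le_of_lt (lt_of_le_of_lt h10 hlt)
        apply mul_le_mul_of_nonneg_right _ (by positivity)
        linarith
      have h13 : 4 * (min c0 c1 / (4 * (2:ℝ)^α)) * ((2:ℝ)^α * (n:ℝ)^α)
          = min c0 c1 * (n:ℝ)^α := by
        field_simp
      linarith
    obtain ⟨C, hC0, hC⟩ := master p hp hsum a ε α hrec
      (fun n => ((n:ℝ)+1) ^ α)
      (fun n => by
        nth_rewrite 1 [← Real.one_rpow α]
        exact Real.rpow_le_rpow zero_le_one (le_add_of_nonneg_left (Nat.cast_nonneg n)) hα.le)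
      K hK hKε (min c0 c1) hc s hs0 hs1 hsp hcontr hsmall
    intro i
    rw [isBigO_iff]
    refine ⟨C * (2:ℝ)^α, ?_⟩
    filter_upwards [eventually_ge_atTop 1] with n hn1
    have hnR : (1:ℝ) ≤ n := by exact_mod_cast hn1
    have hα0 : 0 ≤ (n:ℝ)^α := Real.rpow_nonneg (by positivity) _
    have h9 : ((n:ℝ)+1)^α ≤ (2:ℝ)^α * (n:ℝ)^α := by
      rw [← Real.mul_rpow (by norm_num) (by positivity)]
      exact Real.rpow_le_rpow (by linarith) (by linarith) hα.le
    have h1 := hC n i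
    rw [Real.norm_eq_abs, Real.norm_eq_abs, abs_of_nonneg hα0]
    calc |a i n| ≤ C * (((n:ℝ)+1)^α) := h1
      _ ≤ C * ((2:ℝ)^α * (n:ℝ)^α) := mul_le_mul_of_nonneg_left h9 hC0
      _ = C * (2:ℝ)^α * (n:ℝ)^α := by ring
  -- ================= case α = 0 =================
  · intro hα
    subst hα
    obtain ⟨c0, hc00, hev0⟩ := contr_log (p 0 0) (hp 0 0)
    obtain ⟨c1, hc10, hev1⟩ := contr_log (p 1 0) (hp 1 0)
    have hc : 0 < min c0 c1 := lt_min hc00 hc10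
    have hcontr : ∀ᶠ n : ℕ in atTop, ∀ i : Fin 2,
        p i 0 * (∑ k ∈ Finset.range (n+1), bw (p i 0) n k * (1 + Real.log ((k:ℝ)+1)))
        + p i 1 * (∑ k ∈ Finset.range (n+1), bw (p i 0) n k * (1 + Real.log (((n-k : ℕ):ℝ)+1)))
        ≤ (1 + Real.log ((n:ℝ)+1)) - min c0 c1 * (n:ℝ) ^ (0:ℝ) := by
      filter_upwards [hev0, hev1] with n e0 e1
      have hα0 : 0 ≤ (n:ℝ)^(0:ℝ) := Real.rpow_nonneg (Nat.cast_nonneg n) _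
      intro i
      fin_cases i
      · show p 0 0 * (∑ k ∈ Finset.range (n+1), bw (p 0 0) n k * (1 + Real.log ((k:ℝ)+1)))
            + p 0 1 * (∑ k ∈ Finset.range (n+1), bw (p 0 0) n k * (1 + Real.log (((n-k : ℕ):ℝ)+1)))
            ≤ (1 + Real.log ((n:ℝ)+1)) - min c0 c1 * (n:ℝ) ^ (0:ℝ)
        rw [h01 0]
        have h5 : min c0 c1 * (n:ℝ)^(0:ℝ) ≤ c0 * (n:ℝ)^(0:ℝ) :=
          mul_le_mul_of_nonneg_right (min_le_left _ _) hα0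
        linarith [e0]
      · show p 1 0 * (∑ k ∈ Finset.range (n+1), bw (p 1 0) n k * (1 + Real.log ((k:ℝ)+1)))
            + p 1 1 * (∑ k ∈ Finset.range (n+1), bw (p 1 0) n k * (1 + Real.log (((n-k : ℕ):ℝ)+1)))
            ≤ (1 + Real.log ((n:ℝ)+1)) - min c0 c1 * (n:ℝ) ^ (0:ℝ)
        rw [h01 1]
        have h5 : min c0 c1 * (n:ℝ)^(0:ℝ) ≤ c1 * (n:ℝ)^(0:ℝ) :=
          mul_le_mul_of_nonneg_right (min_le_right _ _) hα0
        linarith [e1]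
    have hsmall : ∀ᶠ n : ℕ in atTop,
        4 * s^(n+1) * (1 + Real.log ((n:ℝ)+1)) ≤ min c0 c1 * (n:ℝ) ^ (0:ℝ) := by
      have hev := (tendsto_pow_const_mul_const_pow_of_lt_one 1 hs0 hs1).eventually_lt_const
        (show (0:ℝ) < min c0 c1 / 8 by positivity)
      filter_upwards [hev, eventually_ge_atTop 1] with n hlt hn1
      have hnR : (1:ℝ) ≤ n := by exact_mod_cast hn1
      rw [Real.rpow_zero, mul_one]
      have h1 : Real.log ((n:ℝ)+1) ≤ (n:ℝ) := by
        have := Real.log_le_sub_one_of_pos (show (0:ℝ) < (n:ℝ)+1 by linarith)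
        linarith
      have h1' : 0 ≤ Real.log ((n:ℝ)+1) := Real.log_nonneg (by linarith)
      have h2 : s^(n+1) ≤ s^n := pow_le_pow_of_le_one hs0 hs1.le (by omega)
      have hsn : (0:ℝ) ≤ s^n := pow_nonneg hs0 _
      have hsn1 : (0:ℝ) ≤ s^(n+1) := pow_nonneg hs0 _
      have h3 : 4 * s^(n+1) * (1 + Real.log ((n:ℝ)+1)) ≤ 4 * s^n * (2*(n:ℝ)) := by
        apply mul_le_mul (by nlinarith) (by nlinarith) (by linarith) (by positivity)
      have h4 : (n:ℝ)^1 * s^n < min c0 c1 / 8 := hlt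
      rw [pow_one] at h4
      nlinarith [h4]
    obtain ⟨C, hC0, hC⟩ := master p hp hsum a ε 0 hrec
      (fun n => 1 + Real.log ((n:ℝ)+1))
      (fun n => by
        have : 0 ≤ Real.log ((n:ℝ)+1) := Real.log_nonneg (by linarith [show (0:ℝ) ≤ n from Nat.cast_nonneg n])
        linarith)
      K hK hKε (min c0 c1) hc s hs0 hs1 hsp hcontr hsmall
    intro i
    rw [isBigO_iff]
    refine ⟨3 * C, ?_⟩
    filter_upwards [eventually_ge_atTop 3] with n hn3
    have hnR : (3:ℝ) ≤ n := by exact_mod_cast hn3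
    have hlog1 : 1 ≤ Real.log n := by
      rw [Real.le_log_iff_exp_le (by linarith)]
      have := Real.exp_one_lt_d9
      linarith
    have hlog2 : Real.log ((n:ℝ)+1) ≤ 2 * Real.log n := by
      have ha : Real.log ((n:ℝ)+1) ≤ Real.log ((n:ℝ)^2) :=
        Real.log_le_log (by linarith) (by nlinarith)
      have hb : Real.log ((n:ℝ)^2) = 2 * Real.log n := by
        rw [Real.log_pow]
        norm_num
      linarith
    have h1 := hC n i
    rw [Real.norm_eq_abs, Real.norm_eq_abs, abs_of_nonneg (by linarith : (0:ℝ) ≤ Real.log n)]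
    calc |a i n| ≤ C * (1 + Real.log ((n:ℝ)+1)) := h1
      _ ≤ C * (3 * Real.log n) := by
          apply mul_le_mul_of_nonneg_left _ hC0
          linarith
      _ = 3 * C * Real.log n := by ring
end
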